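/- Suppose f : [0,1]×[0,∞) → [0,∞) is continuous and satisfies: (C1) there exist real numbers a and c with 0 < a, a·τ₂ < 1, c > 0, and f(t,x) ≤ a·x + c for all (t,x) ∈ [0,1]×[0,∞); (C2) there exist real numbers b and δ with b·τ₁ ≥ 1, δ > 0, and f(t,x) ≥ b·x for all (t,x) ∈ [0,1]×[0,δ]. Then there exists a continuous function u : [0,1] → ℝ with u(t) ≥ 0 for all t ∈ [0,1], u not identically zero, such that u(t) = ∫₀¹ H(t,s)·f(s,u(s)) ds for all t ∈ [0,1] (i.e., the nonlocal fractional boundary value problem D^α u + f(t,u) = 0, u(0) = u''(0) = 0, u(1) = μ₀u(η) + βγ[u] has at least one positive solution). -/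

import Mathlib

open MeasureTheory Set Filter

noncomputable def G (α t s : ℝ) : ℝ :=
  if s ≤ t then (t * (1 - s) ^ (α - 1) - (t - s) ^ (α - 1)) / Real.Gamma α
  else t * (1 - s) ^ (α - 1) / Real.Gamma α

noncomputable def Psi (α s : ℝ) : ℝ := (1 - s) ^ (α - 1) / Real.Gamma α

/-- Integral of `f` over `[0,1]` against the finite signed measure `ν`
(via its Jordan decomposition). -/
noncomputable def stInt (ν : MeasureTheory.SignedMeasure ℝ) (f : ℝ → ℝ) : ℝ :=
  ∫ t in Icc (0:ℝ) 1, f t ∂ν.toJordanDecomposition.posPart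
    - ∫ t in Icc (0:ℝ) 1, f t ∂ν.toJordanDecomposition.negPart

noncomputable def gA (α : ℝ) (ν : MeasureTheory.SignedMeasure ℝ) (s : ℝ) : ℝ :=
  stInt ν (fun t => G α t s)

noncomputable def Lam (η μ₀ β : ℝ) (ν : MeasureTheory.SignedMeasure ℝ) : ℝ :=
  μ₀ * η + β * stInt ν (fun t => t)

noncomputable def Hker (α η μ₀ β : ℝ) (ν : MeasureTheory.SignedMeasure ℝ) (t s : ℝ) : ℝ :=
  β * t / (1 - Lam η μ₀ β ν) * gA α ν s
    + μ₀ * t / (1 - Lam η μ₀ β ν) * G α η s + G α t s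

noncomputable def Phi (α η μ₀ β : ℝ) (ν : MeasureTheory.SignedMeasure ℝ) (s : ℝ) : ℝ :=
  β / (1 - Lam η μ₀ β ν) * gA α ν s
    + (μ₀ - Lam η μ₀ β ν + 1) / (1 - Lam η μ₀ β ν) * Psi α s

noncomputable def rho (α η t : ℝ) : ℝ := (η - η ^ (α - 1)) * (t - t ^ (α - 1))

noncomputable def tau1 (α η μ₀ β : ℝ) (ν : MeasureTheory.SignedMeasure ℝ) : ℝ :=
  ∫ s in Icc (0:ℝ) 1, rho α η s * Phi α η μ₀ β ν s

noncomputable def tau2 (α η μ₀ β : ℝ) (ν : MeasureTheory.SignedMeasure ℝ) : ℝ :=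
  ∫ s in Icc (0:ℝ) 1, Phi α η μ₀ β ν s


namespace BVPaux
open MeasureTheory Set Filter

/-- The Volterra part of the kernel. -/
noncomputable def Kk (α t s : ℝ) : ℝ := max (t - s) 0 ^ (α - 1) / Real.Gamma α

lemma Gamma_pos {α : ℝ} (hα : 2 < α) : 0 < Real.Gamma α :=
  Real.Gamma_pos_of_pos (by linarith)

lemma abs_rpow_sub_rpow {α : ℝ} (hα : 2 < α) {x y : ℝ} (hx : x ∈ Icc (0:ℝ) 1)
    (hy : y ∈ Icc (0:ℝ) 1) : |x ^ (α-1) - y ^ (α-1)| ≤ (α - 1) * |x - y| := by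
  have h := Convex.norm_image_sub_le_of_norm_hasDerivWithin_le (𝕜 := ℝ)
    (f := fun z : ℝ => z ^ (α-1)) (f' := fun z : ℝ => (α-1) * z ^ (α-1-1))
    (s := Icc (0:ℝ) 1) (C := α - 1) ?_ ?_ (convex_Icc 0 1) hy hx
  · simpa [Real.norm_eq_abs] using h
  · intro z _
    exact (Real.hasDerivAt_rpow_const (x := z) (p := α-1)
      (Or.inr (by linarith))).hasDerivWithinAt
  · intro z hz
    rw [Real.norm_eq_abs, abs_mul]
    have h1 : |z ^ (α-1-1)| ≤ 1 := by
      rw [abs_of_nonneg (Real.rpow_nonneg hz.1 _)]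
      exact Real.rpow_le_one hz.1 hz.2 (by linarith)
    have h2 : |α - 1| = α - 1 := abs_of_pos (by linarith)
    nlinarith [abs_nonneg (z ^ (α-1-1))]

lemma rpow_self_le {α : ℝ} (hα : 2 < α) {x : ℝ} (hx : x ∈ Icc (0:ℝ) 1) :
    x ^ (α-1) ≤ x := by
  rcases eq_or_lt_of_le hx.1 with h|h
  · rw [← h, Real.zero_rpow (by norm_num; linarith)]
  · calc x ^ (α-1) ≤ x ^ (1:ℝ) :=
        Real.rpow_le_rpow_of_exponent_ge h hx.2 (by linarith)
      _ = x := Real.rpow_one x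

lemma rpow_self_lt {α : ℝ} (hα : 2 < α) {x : ℝ} (hx : x ∈ Ioo (0:ℝ) 1) :
    x ^ (α-1) < x := by
  calc x ^ (α-1) < x ^ (1:ℝ) :=
      Real.rpow_lt_rpow_of_exponent_gt hx.1 hx.2 (by linarith)
    _ = x := Real.rpow_one x

lemma sub_rpow_mem {α : ℝ} (hα : 2 < α) {x : ℝ} (hx : x ∈ Icc (0:ℝ) 1) :
    x - x ^ (α-1) ∈ Icc (0:ℝ) 1 :=
  ⟨sub_nonneg.2 (rpow_self_le hα hx),
    le_trans (by have := Real.rpow_nonneg hx.1 (α-1); linarith [hx.2]) le_rfl⟩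

/-! ### rho -/

lemma rho_eq (α η t : ℝ) : rho α η t = (η - η ^ (α-1)) * (t - t ^ (α-1)) := rfl

lemma rho_mem {α η : ℝ} (hα : 2 < α) (hη : η ∈ Ioo (0:ℝ) 1) {t : ℝ}
    (ht : t ∈ Icc (0:ℝ) 1) : rho α η t ∈ Icc (0:ℝ) 1 := by
  have h1 := sub_rpow_mem hα (Ioo_subset_Icc_self hη)
  have h2 := sub_rpow_mem hα ht
  rw [rho_eq]
  exact ⟨mul_nonneg h1.1 h2.1, by nlinarith [h1.1, h1.2, h2.1, h2.2]⟩

lemma rho_le_self {α η : ℝ} (hα : 2 < α) (hη : η ∈ Ioo (0:ℝ) 1) {t : ℝ}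
    (ht : t ∈ Icc (0:ℝ) 1) : rho α η t ≤ t := by
  have h1 := sub_rpow_mem hα (Ioo_subset_Icc_self hη)
  have h2 := sub_rpow_mem hα ht
  have h3 : t - t ^ (α-1) ≤ t := by
    have := Real.rpow_nonneg ht.1 (α-1); linarith
  rw [rho_eq]
  nlinarith [h1.1, h1.2, h2.1, ht.1]

lemma rho_sub_le {α η : ℝ} (hα : 2 < α) (hη : η ∈ Ioo (0:ℝ) 1) {t : ℝ}
    (ht : t ∈ Icc (0:ℝ) 1) : rho α η t ≤ (η - η ^ (α-1)) * t := by
  have h1 := sub_rpow_mem hα (Ioo_subset_Icc_self hη)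
  have h3 : t - t ^ (α-1) ≤ t := by
    have := Real.rpow_nonneg ht.1 (α-1); linarith
  rw [rho_eq]
  nlinarith [h1.1, sub_rpow_mem hα ht |>.1]

lemma rho_lipschitz {α η : ℝ} (hα : 2 < α) (hη : η ∈ Ioo (0:ℝ) 1) {t t' : ℝ}
    (ht : t ∈ Icc (0:ℝ) 1) (ht' : t' ∈ Icc (0:ℝ) 1) :
    |rho α η t - rho α η t'| ≤ α * |t - t'| := by
  have h1 := sub_rpow_mem hα (Ioo_subset_Icc_self hη)
  have h2 := abs_rpow_sub_rpow hα ht ht'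
  have : rho α η t - rho α η t' = (η - η ^ (α-1)) * ((t - t') - (t ^ (α-1) - t' ^ (α-1))) := by
    rw [rho_eq, rho_eq]; ring
  rw [this, abs_mul, abs_of_nonneg h1.1]
  have h4 : |(t - t') - (t ^ (α-1) - t' ^ (α-1))| ≤ |t - t'| + (α-1) * |t - t'| := by
    calc |(t - t') - (t ^ (α-1) - t' ^ (α-1))| ≤ |t - t'| + |t ^ (α-1) - t' ^ (α-1)| :=
        abs_sub _ _
      _ ≤ |t - t'| + (α-1) * |t - t'| := by linarith
  have h5 : (η - η ^ (α-1)) * |(t - t') - (t ^ (α-1) - t' ^ (α-1))| ≤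
      1 * (|t - t'| + (α-1) * |t - t'|) := by
    apply mul_le_mul h1.2 h4 (abs_nonneg _) zero_le_one
  nlinarith [abs_nonneg (t - t')]

/-! ### Psi and Kk -/

lemma Psi_nonneg {α : ℝ} (hα : 2 < α) {s : ℝ} (hs : s ∈ Icc (0:ℝ) 1) : 0 ≤ Psi α s :=
  div_nonneg (Real.rpow_nonneg (by linarith [hs.2]) _) (Gamma_pos hα).le

lemma Psi_le {α : ℝ} (hα : 2 < α) {s : ℝ} (hs : s ∈ Icc (0:ℝ) 1) :
    Psi α s ≤ 1 / Real.Gamma α := by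
  unfold Psi
  rw [div_le_div_iff_of_pos_right (Gamma_pos hα)]
  exact Real.rpow_le_one (by linarith [hs.2]) (by linarith [hs.1]) (by linarith)

lemma Psi_pos {α : ℝ} (hα : 2 < α) {s : ℝ} (hs : s ∈ Ico (0:ℝ) 1) : 0 < Psi α s :=
  div_pos (Real.rpow_pos_of_pos (by linarith [hs.2]) _) (Gamma_pos hα)

lemma Psi_lip {α : ℝ} (hα : 2 < α) {s s' : ℝ} (hs : s ∈ Icc (0:ℝ) 1)
    (hs' : s' ∈ Icc (0:ℝ) 1) : |Psi α s - Psi α s'| ≤ ((α-1) / Real.Gamma α) * |s - s'| := by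
  have hΓ := Gamma_pos hα
  have h := abs_rpow_sub_rpow hα (x := 1 - s) (y := 1 - s')
    ⟨by linarith [hs.2], by linarith [hs.1]⟩ ⟨by linarith [hs'.2], by linarith [hs'.1]⟩
  have he : |(1-s) - (1-s')| = |s - s'| := by rw [show (1-s) - (1-s') = -(s - s') by ring, abs_neg]
  rw [he] at h
  have : Psi α s - Psi α s' = ((1-s) ^ (α-1) - (1-s') ^ (α-1)) / Real.Gamma α := by
    unfold Psi; ring
  rw [this, abs_div, abs_of_pos hΓ, div_le_iff₀ hΓ]
  calc |(1-s) ^ (α-1) - (1-s') ^ (α-1)| ≤ (α-1) * |s - s'| := h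
    _ = (α-1) / Real.Gamma α * |s - s'| * Real.Gamma α := by field_simp
 
lemma Kk_nonneg {α : ℝ} (hα : 2 < α) (t s : ℝ) : 0 ≤ Kk α t s :=
  div_nonneg (Real.rpow_nonneg (le_max_right _ _) _) (Gamma_pos hα).le

lemma Kk_le {α : ℝ} (hα : 2 < α) {t s : ℝ} (ht : t ∈ Icc (0:ℝ) 1) (hs : 0 ≤ s) :
    Kk α t s ≤ 1 / Real.Gamma α := by
  unfold Kk
  rw [div_le_div_iff_of_pos_right (Gamma_pos hα)]
  exact Real.rpow_le_one (le_max_right _ _)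
      (max_le (by linarith [ht.2]) zero_le_one) (by linarith)

lemma Kk_eq_zero {α : ℝ} (hα : 2 < α) {t s : ℝ} (h : t ≤ s) : Kk α t s = 0 := by
  unfold Kk
  rw [max_eq_right (by linarith), Real.zero_rpow (by norm_num; linarith), zero_div]

lemma Kk_lip_t {α : ℝ} (hα : 2 < α) {t t' s : ℝ} (ht : t ∈ Icc (0:ℝ) 1)
    (ht' : t' ∈ Icc (0:ℝ) 1) (hs : s ∈ Icc (0:ℝ) 1) :
    |Kk α t s - Kk α t' s| ≤ ((α-1) / Real.Gamma α) * |t - t'| := by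
  have hΓ := Gamma_pos hα
  have hm : max (t - s) 0 ∈ Icc (0:ℝ) 1 :=
    ⟨le_max_right _ _, max_le (by linarith [ht.2, hs.1]) zero_le_one⟩
  have hm' : max (t' - s) 0 ∈ Icc (0:ℝ) 1 :=
    ⟨le_max_right _ _, max_le (by linarith [ht'.2, hs.1]) zero_le_one⟩
  have h := abs_rpow_sub_rpow hα hm hm'
  have hmax : |max (t - s) 0 - max (t' - s) 0| ≤ |t - t'| := by
    have := abs_max_sub_max_le_abs (t - s) (t' - s) 0
    calc |max (t - s) 0 - max (t' - s) 0| ≤ |(t - s) - (t' - s)| := this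
      _ = |t - t'| := by rw [show (t-s) - (t'-s) = t - t' by ring]
  have : Kk α t s - Kk α t' s = (max (t-s) 0 ^ (α-1) - max (t'-s) 0 ^ (α-1)) / Real.Gamma α := by
    unfold Kk; ring
  rw [this, abs_div, abs_of_pos hΓ, div_le_iff₀ hΓ]
  calc |max (t-s) 0 ^ (α-1) - max (t'-s) 0 ^ (α-1)| ≤ (α-1) * |max (t - s) 0 - max (t' - s) 0| := h
    _ ≤ (α-1) * |t - t'| := by nlinarith [abs_nonneg (max (t - s) 0 - max (t' - s) 0)]
    _ = (α-1) / Real.Gamma α * |t - t'| * Real.Gamma α := by field_simp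

lemma Kk_lip_s {α : ℝ} (hα : 2 < α) {t s s' : ℝ} (ht : t ∈ Icc (0:ℝ) 1)
    (hs : s ∈ Icc (0:ℝ) 1) (hs' : s' ∈ Icc (0:ℝ) 1) :
    |Kk α t s - Kk α t s'| ≤ ((α-1) / Real.Gamma α) * |s - s'| := by
  have hΓ := Gamma_pos hα
  have hm : max (t - s) 0 ∈ Icc (0:ℝ) 1 :=
    ⟨le_max_right _ _, max_le (by linarith [ht.2, hs.1]) zero_le_one⟩
  have hm' : max (t - s') 0 ∈ Icc (0:ℝ) 1 :=
    ⟨le_max_right _ _, max_le (by linarith [ht.2, hs'.1]) zero_le_one⟩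
  have h := abs_rpow_sub_rpow hα hm hm'
  have hmax : |max (t - s) 0 - max (t - s') 0| ≤ |s - s'| := by
    have := abs_max_sub_max_le_abs (t - s) (t - s') 0
    calc |max (t - s) 0 - max (t - s') 0| ≤ |(t - s) - (t - s')| := this
      _ = |s - s'| := by rw [show (t-s) - (t-s') = -(s - s') by ring, abs_neg]
  have : Kk α t s - Kk α t s' = (max (t-s) 0 ^ (α-1) - max (t-s') 0 ^ (α-1)) / Real.Gamma α := by
    unfold Kk; ring
  rw [this, abs_div, abs_of_pos hΓ, div_le_iff₀ hΓ]
  calc |max (t-s) 0 ^ (α-1) - max (t-s') 0 ^ (α-1)| ≤ (α-1) * |max (t - s) 0 - max (t - s') 0| := h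
    _ ≤ (α-1) * |s - s'| := by nlinarith [abs_nonneg (max (t - s) 0 - max (t - s') 0)]
    _ = (α-1) / Real.Gamma α * |s - s'| * Real.Gamma α := by field_simp

lemma Kk_continuous {α : ℝ} (hα : 2 < α) : Continuous fun p : ℝ × ℝ => Kk α p.1 p.2 := by
  unfold Kk
  apply Continuous.div_const
  apply Continuous.rpow_const
  · exact (continuous_fst.sub continuous_snd).max continuous_const
  · intro x; right; linarith

/-! ### G -/

lemma G_eq {α : ℝ} (hα : 2 < α) (t s : ℝ) : G α t s = t * Psi α s - Kk α t s := by
  unfold G Psi Kk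
  split_ifs with h
  · rw [max_eq_left (by linarith)]; ring
  · rw [max_eq_right (by linarith), Real.zero_rpow (by norm_num; linarith)]; ring

lemma G_le_Psi {α : ℝ} (hα : 2 < α) {t s : ℝ} (ht : t ∈ Icc (0:ℝ) 1)
    (hs : s ∈ Icc (0:ℝ) 1) : G α t s ≤ Psi α s := by
  rw [G_eq hα]
  have h1 : t * Psi α s ≤ 1 * Psi α s := by
    apply mul_le_mul_of_nonneg_right ht.2 (Psi_nonneg hα hs)
  have := Kk_nonneg hα t s
  linarith

lemma G_ge {α : ℝ} (hα : 2 < α) {t s : ℝ} (ht : t ∈ Icc (0:ℝ) 1)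
    (hs : s ∈ Icc (0:ℝ) 1) : (t - t ^ (α-1)) * Psi α s ≤ G α t s := by
  rw [G_eq hα]
  have hΓ := Gamma_pos hα
  have hK : Kk α t s ≤ t ^ (α-1) * Psi α s := by
    unfold Kk Psi
    rw [← mul_div_assoc, div_le_div_iff_of_pos_right hΓ]
    rw [← Real.mul_rpow ht.1 (by linarith [hs.2])]
    apply Real.rpow_le_rpow (le_max_right _ _) _ (by linarith)
    apply max_le _ (by nlinarith [ht.1, hs.1, ht.2, hs.2])
    nlinarith [ht.2, hs.1]
  nlinarith [hK]

lemma G_nonneg {α : ℝ} (hα : 2 < α) {t s : ℝ} (ht : t ∈ Icc (0:ℝ) 1)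
    (hs : s ∈ Icc (0:ℝ) 1) : 0 ≤ G α t s :=
  le_trans (mul_nonneg (sub_rpow_mem hα ht).1 (Psi_nonneg hα hs)) (G_ge hα ht hs)

lemma G_lip_t {α : ℝ} (hα : 2 < α) {t t' s : ℝ} (ht : t ∈ Icc (0:ℝ) 1)
    (ht' : t' ∈ Icc (0:ℝ) 1) (hs : s ∈ Icc (0:ℝ) 1) :
    |G α t s - G α t' s| ≤ (α / Real.Gamma α) * |t - t'| := by
  have hΓ := Gamma_pos hα
  rw [G_eq hα, G_eq hα]
  have h1 : |(t - t') * Psi α s| ≤ (1 / Real.Gamma α) * |t - t'| := by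
    rw [abs_mul]
    have := Psi_le hα hs
    have := Psi_nonneg hα hs
    rw [abs_of_nonneg (Psi_nonneg hα hs)]
    nlinarith [abs_nonneg (t - t')]
  have h2 := Kk_lip_t hα ht ht' hs
  calc |t * Psi α s - Kk α t s - (t' * Psi α s - Kk α t' s)|
      = |(t - t') * Psi α s - (Kk α t s - Kk α t' s)| := by ring_nf
    _ ≤ |(t - t') * Psi α s| + |Kk α t s - Kk α t' s| := abs_sub _ _
    _ ≤ (1 / Real.Gamma α) * |t - t'| + ((α-1) / Real.Gamma α) * |t - t'| := by linarith
    _ = (α / Real.Gamma α) * |t - t'| := by field_simp; ring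

lemma G_lip_s {α : ℝ} (hα : 2 < α) {t s s' : ℝ} (ht : t ∈ Icc (0:ℝ) 1)
    (hs : s ∈ Icc (0:ℝ) 1) (hs' : s' ∈ Icc (0:ℝ) 1) :
    |G α t s - G α t s'| ≤ (2 * α / Real.Gamma α) * |s - s'| := by
  have hΓ := Gamma_pos hα
  rw [G_eq hα, G_eq hα]
  have h1 : |t * (Psi α s - Psi α s')| ≤ ((α-1) / Real.Gamma α) * |s - s'| := by
    rw [abs_mul, abs_of_nonneg ht.1]
    have := Psi_lip hα hs hs'
    have h0 : 0 ≤ ((α-1) / Real.Gamma α) * |s - s'| :=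
      mul_nonneg (div_nonneg (by linarith) hΓ.le) (abs_nonneg _)
    nlinarith [ht.2, abs_nonneg (Psi α s - Psi α s')]
  have h2 := Kk_lip_s hα ht hs hs'
  calc |t * Psi α s - Kk α t s - (t * Psi α s' - Kk α t s')|
      = |t * (Psi α s - Psi α s') - (Kk α t s - Kk α t s')| := by ring_nf
    _ ≤ |t * (Psi α s - Psi α s')| + |Kk α t s - Kk α t s'| := abs_sub _ _
    _ ≤ ((α-1) / Real.Gamma α) * |s - s'| + ((α-1) / Real.Gamma α) * |s - s'| := by linarith
    _ ≤ (2 * α / Real.Gamma α) * |s - s'| := by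
        have h0 : 0 ≤ |s - s'| := abs_nonneg _
        have h3 : (α-1) / Real.Gamma α ≤ α / Real.Gamma α := by
          rw [div_le_div_iff_of_pos_right hΓ]; linarith
        have h4 : (α-1) / Real.Gamma α * |s - s'| ≤ α / Real.Gamma α * |s - s'| :=
          mul_le_mul_of_nonneg_right h3 h0
        have h5 : (2 * α / Real.Gamma α) * |s - s'| = 2 * (α / Real.Gamma α * |s - s'|) := by
          ring
        linarith

/-! ### gA and the kernels q, Phi, Hker -/

lemma Psi_continuous {α : ℝ} (hα : 2 < α) : Continuous (Psi α) := by
  unfold Psi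
  apply Continuous.div_const
  apply Continuous.rpow_const (continuous_const.sub continuous_id)
  intro x; right; linarith

lemma G_cont_t {α : ℝ} (hα : 2 < α) (s : ℝ) : Continuous fun t => G α t s := by
  simp only [G_eq hα]
  apply Continuous.sub
  · exact continuous_id.mul continuous_const
  · exact (Kk_continuous hα).comp (continuous_id.prodMk continuous_const)

lemma G_cont_s {α : ℝ} (hα : 2 < α) (t : ℝ) : Continuous fun s => G α t s := by
  simp only [G_eq hα]
  apply Continuous.sub
  · exact (continuous_const.mul (Psi_continuous hα))
  · exact (Kk_continuous hα).comp (continuous_const.prodMk continuous_id)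

lemma G_abs_le {α : ℝ} (hα : 2 < α) {t s : ℝ} (ht : t ∈ Icc (0:ℝ) 1)
    (hs : s ∈ Icc (0:ℝ) 1) : |G α t s| ≤ 1 / Real.Gamma α := by
  rw [abs_of_nonneg (G_nonneg hα ht hs)]
  exact le_trans (G_le_Psi hα ht hs) (Psi_le hα hs)

noncomputable def massT (ν : MeasureTheory.SignedMeasure ℝ) : ℝ :=
  (ν.toJordanDecomposition.posPart (Icc 0 1)).toReal
    + (ν.toJordanDecomposition.negPart (Icc 0 1)).toReal

lemma massT_nonneg (ν : MeasureTheory.SignedMeasure ℝ) : 0 ≤ massT ν := by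
  unfold massT; positivity

lemma G_intP {α : ℝ} (ν : MeasureTheory.SignedMeasure ℝ) (hα : 2 < α) (s : ℝ) :
    IntegrableOn (fun t => G α t s) (Icc (0:ℝ) 1) ν.toJordanDecomposition.posPart :=
  (G_cont_t hα s).continuousOn.integrableOn_compact isCompact_Icc

lemma G_intN {α : ℝ} (ν : MeasureTheory.SignedMeasure ℝ) (hα : 2 < α) (s : ℝ) :
    IntegrableOn (fun t => G α t s) (Icc (0:ℝ) 1) ν.toJordanDecomposition.negPart :=
  (G_cont_t hα s).continuousOn.integrableOn_compact isCompact_Icc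

lemma gA_sub_le {α : ℝ} (ν : MeasureTheory.SignedMeasure ℝ) (hα : 2 < α) {s s' : ℝ}
    (hs : s ∈ Icc (0:ℝ) 1) (hs' : s' ∈ Icc (0:ℝ) 1) :
    |gA α ν s - gA α ν s'| ≤ (massT ν * (2 * α / Real.Gamma α)) * |s - s'| := by
  have hΓ := Gamma_pos hα
  unfold gA stInt
  set μp := ν.toJordanDecomposition.posPart
  set μn := ν.toJordanDecomposition.negPart
  have hip : ∀ z : ℝ, IntegrableOn (fun t => G α t z) (Icc (0:ℝ) 1) μp :=
    fun z => G_intP ν hα z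
  have hin : ∀ z : ℝ, IntegrableOn (fun t => G α t z) (Icc (0:ℝ) 1) μn :=
    fun z => G_intN ν hα z
  have hsubP : (∫ t in Icc (0:ℝ) 1, G α t s ∂μp) - ∫ t in Icc (0:ℝ) 1, G α t s' ∂μp
      = ∫ t in Icc (0:ℝ) 1, (G α t s - G α t s') ∂μp :=
    (integral_sub (hip s) (hip s')).symm
  have hsubN : (∫ t in Icc (0:ℝ) 1, G α t s ∂μn) - ∫ t in Icc (0:ℝ) 1, G α t s' ∂μn
      = ∫ t in Icc (0:ℝ) 1, (G α t s - G α t s') ∂μn :=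
    (integral_sub (hin s) (hin s')).symm
  have key : ∀ (μ : Measure ℝ) [IsFiniteMeasure μ],
      ‖∫ t in Icc (0:ℝ) 1, (G α t s - G α t s') ∂μ‖
        ≤ (2 * α / Real.Gamma α) * |s - s'| * (μ.restrict (Icc 0 1) univ).toReal := by
    intro μ _
    apply norm_integral_le_of_norm_le_const
    filter_upwards [MeasureTheory.ae_restrict_mem measurableSet_Icc] with t ht
    rw [Real.norm_eq_abs]
    exact G_lip_s hα ht hs hs'
  have hP := key μp
  have hN := key μn
  rw [Measure.restrict_apply_univ] at hP hN
  have habs : |(∫ t in Icc (0:ℝ) 1, G α t s ∂μp - ∫ t in Icc (0:ℝ) 1, G α t s ∂μn)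
      - (∫ t in Icc (0:ℝ) 1, G α t s' ∂μp - ∫ t in Icc (0:ℝ) 1, G α t s' ∂μn)|
      ≤ |(∫ t in Icc (0:ℝ) 1, G α t s ∂μp) - ∫ t in Icc (0:ℝ) 1, G α t s' ∂μp|
        + |(∫ t in Icc (0:ℝ) 1, G α t s ∂μn) - ∫ t in Icc (0:ℝ) 1, G α t s' ∂μn| := by
    have := abs_sub ((∫ t in Icc (0:ℝ) 1, G α t s ∂μp) - ∫ t in Icc (0:ℝ) 1, G α t s' ∂μp)
      ((∫ t in Icc (0:ℝ) 1, G α t s ∂μn) - ∫ t in Icc (0:ℝ) 1, G α t s' ∂μn)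
    calc _ = |((∫ t in Icc (0:ℝ) 1, G α t s ∂μp) - ∫ t in Icc (0:ℝ) 1, G α t s' ∂μp)
        - ((∫ t in Icc (0:ℝ) 1, G α t s ∂μn) - ∫ t in Icc (0:ℝ) 1, G α t s' ∂μn)| := by
          ring_nf
      _ ≤ _ := this
  rw [hsubP, hsubN] at habs
  rw [Real.norm_eq_abs] at hP hN
  unfold massT
  nlinarith [habs, hP, hN, abs_nonneg (s - s'),
    ENNReal.toReal_nonneg (a := μp (Icc (0:ℝ) 1)), ENNReal.toReal_nonneg (a := μn (Icc (0:ℝ) 1))]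

lemma gA_contOn {α : ℝ} (ν : MeasureTheory.SignedMeasure ℝ) (hα : 2 < α) :
    ContinuousOn (gA α ν) (Icc (0:ℝ) 1) := by
  have h : LipschitzOnWith (Real.toNNReal (massT ν * (2 * α / Real.Gamma α)))
      (gA α ν) (Icc (0:ℝ) 1) := by
    apply LipschitzOnWith.of_dist_le_mul
    intro x hx y hy
    rw [Real.dist_eq, Real.dist_eq]
    calc |gA α ν x - gA α ν y| ≤ (massT ν * (2 * α / Real.Gamma α)) * |x - y| :=
        gA_sub_le ν hα hx hy
      _ ≤ _ := by
        apply mul_le_mul_of_nonneg_right (Real.le_coe_toNNReal _) (abs_nonneg _)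
  exact h.continuousOn

/-- The coefficient kernel `q`. -/
noncomputable def qq (α η μ₀ β : ℝ) (ν : MeasureTheory.SignedMeasure ℝ) (s : ℝ) : ℝ :=
  β / (1 - Lam η μ₀ β ν) * gA α ν s + μ₀ / (1 - Lam η μ₀ β ν) * G α η s + Psi α s

lemma Hker_eq {α η μ₀ β : ℝ} {ν : MeasureTheory.SignedMeasure ℝ} (hα : 2 < α) (t s : ℝ) :
    Hker α η μ₀ β ν t s = t * qq α η μ₀ β ν s - Kk α t s := by
  unfold Hker qq
  rw [G_eq hα t s]
  ring

lemma qq_contOn {α η μ₀ β : ℝ} (ν : MeasureTheory.SignedMeasure ℝ) (hα : 2 < α) :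
    ContinuousOn (qq α η μ₀ β ν) (Icc (0:ℝ) 1) := by
  apply ContinuousOn.add
  apply ContinuousOn.add
  · exact continuousOn_const.mul (gA_contOn ν hα)
  · exact continuousOn_const.mul (G_cont_s hα η).continuousOn
  · exact (Psi_continuous hα).continuousOn

lemma Phi_contOn {α η μ₀ β : ℝ} (ν : MeasureTheory.SignedMeasure ℝ) (hα : 2 < α) :
    ContinuousOn (Phi α η μ₀ β ν) (Icc (0:ℝ) 1) := by
  unfold Phi
  apply ContinuousOn.add
  · exact continuousOn_const.mul (gA_contOn ν hα)
  · exact continuousOn_const.mul (Psi_continuous hα).continuousOn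

/-! ### pointwise bounds -/

section Bounds
variable {α η μ₀ β : ℝ} {ν : MeasureTheory.SignedMeasure ℝ}

lemma rho_le_sub {α η : ℝ} (hα : 2 < α) (hη : η ∈ Ioo (0:ℝ) 1) {t : ℝ}
    (ht : t ∈ Icc (0:ℝ) 1) : rho α η t ≤ t - t ^ (α-1) := by
  have h1 := sub_rpow_mem hα (Ioo_subset_Icc_self hη)
  have h2 := sub_rpow_mem hα ht
  rw [rho_eq]
  nlinarith [h1.1, h1.2, h2.1]

lemma rho_pos {α η : ℝ} (hα : 2 < α) (hη : η ∈ Ioo (0:ℝ) 1) {t : ℝ}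
    (ht : t ∈ Ioo (0:ℝ) 1) : 0 < rho α η t := by
  rw [rho_eq]
  have h1 : η ^ (α-1) < η := rpow_self_lt hα hη
  have h2 : t ^ (α-1) < t := rpow_self_lt hα ht
  nlinarith

lemma rho_continuous {α η : ℝ} (hα : 2 < α) : Continuous (rho α η) := by
  unfold rho
  apply continuous_const.mul
  apply Continuous.sub continuous_id
  apply Continuous.rpow_const continuous_id
  intro x; right; linarith

lemma qq_nonneg (hα : 2 < α) (hη : η ∈ Ioo (0:ℝ) 1) (hμ : 0 ≤ μ₀) (hβ : 0 ≤ β)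
    (hΛ₁ : Lam η μ₀ β ν < 1) (hgA : ∀ s ∈ Icc (0:ℝ) 1, 0 ≤ gA α ν s)
    {s : ℝ} (hs : s ∈ Icc (0:ℝ) 1) : 0 ≤ qq α η μ₀ β ν s := by
  have h1 : (0:ℝ) < 1 - Lam η μ₀ β ν := by linarith
  exact add_nonneg (add_nonneg (mul_nonneg (div_nonneg hβ h1.le) (hgA s hs))
    (mul_nonneg (div_nonneg hμ h1.le) (G_nonneg hα (Ioo_subset_Icc_self hη) hs)))
    (Psi_nonneg hα hs)

lemma qq_le_Phi (hα : 2 < α) (hη : η ∈ Ioo (0:ℝ) 1) (hμ : 0 ≤ μ₀)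
    (hΛ₁ : Lam η μ₀ β ν < 1)
    {s : ℝ} (hs : s ∈ Icc (0:ℝ) 1) : qq α η μ₀ β ν s ≤ Phi α η μ₀ β ν s := by
  have h1 : (0:ℝ) < 1 - Lam η μ₀ β ν := by linarith
  have h1' : 1 - Lam η μ₀ β ν ≠ 0 := ne_of_gt h1
  have key : Phi α η μ₀ β ν s - qq α η μ₀ β ν s
      = μ₀ / (1 - Lam η μ₀ β ν) * (Psi α s - G α η s) := by
    unfold Phi qq; field_simp; ring
  have h2 : 0 ≤ μ₀ / (1 - Lam η μ₀ β ν) * (Psi α s - G α η s) :=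
    mul_nonneg (div_nonneg hμ h1.le)
      (sub_nonneg.2 (G_le_Psi hα (Ioo_subset_Icc_self hη) hs))
  linarith

lemma Phi_expand (hΛ₁ : Lam η μ₀ β ν < 1) (s : ℝ) :
    Phi α η μ₀ β ν s = β / (1 - Lam η μ₀ β ν) * gA α ν s
      + μ₀ / (1 - Lam η μ₀ β ν) * Psi α s + Psi α s := by
  have h1' : 1 - Lam η μ₀ β ν ≠ 0 := by intro h; rw [sub_eq_zero] at h; linarith [h.symm]
  unfold Phi; field_simp; ring

lemma Psi_le_Phi (hα : 2 < α) (hμ : 0 ≤ μ₀) (hβ : 0 ≤ β)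
    (hΛ₁ : Lam η μ₀ β ν < 1) (hgA : ∀ s ∈ Icc (0:ℝ) 1, 0 ≤ gA α ν s)
    {s : ℝ} (hs : s ∈ Icc (0:ℝ) 1) : Psi α s ≤ Phi α η μ₀ β ν s := by
  have h1 : (0:ℝ) < 1 - Lam η μ₀ β ν := by linarith
  rw [Phi_expand hΛ₁]
  have h2 : 0 ≤ β / (1 - Lam η μ₀ β ν) * gA α ν s :=
    mul_nonneg (div_nonneg hβ h1.le) (hgA s hs)
  have h3 : 0 ≤ μ₀ / (1 - Lam η μ₀ β ν) * Psi α s :=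
    mul_nonneg (div_nonneg hμ h1.le) (Psi_nonneg hα hs)
  linarith

lemma Phi_nonneg (hα : 2 < α) (hη : η ∈ Ioo (0:ℝ) 1) (hμ : 0 ≤ μ₀) (hβ : 0 ≤ β)
    (hΛ₁ : Lam η μ₀ β ν < 1) (hgA : ∀ s ∈ Icc (0:ℝ) 1, 0 ≤ gA α ν s)
    {s : ℝ} (hs : s ∈ Icc (0:ℝ) 1) : 0 ≤ Phi α η μ₀ β ν s :=
  le_trans (qq_nonneg hα hη hμ hβ hΛ₁ hgA hs) (qq_le_Phi hα hη hμ hΛ₁ hs)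

lemma Hker_expand (t s : ℝ) : Hker α η μ₀ β ν t s
    = (β / (1 - Lam η μ₀ β ν) * gA α ν s) * t
      + (μ₀ / (1 - Lam η μ₀ β ν)) * (t * G α η s) + G α t s := by
  unfold Hker; ring

lemma Hker_nonneg (hα : 2 < α) (hη : η ∈ Ioo (0:ℝ) 1) (hμ : 0 ≤ μ₀) (hβ : 0 ≤ β)
    (hΛ₁ : Lam η μ₀ β ν < 1) (hgA : ∀ s ∈ Icc (0:ℝ) 1, 0 ≤ gA α ν s)
    {t s : ℝ} (ht : t ∈ Icc (0:ℝ) 1) (hs : s ∈ Icc (0:ℝ) 1) :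
    0 ≤ Hker α η μ₀ β ν t s := by
  have h1 : (0:ℝ) < 1 - Lam η μ₀ β ν := by linarith
  rw [Hker_expand]
  have h2 : 0 ≤ (β / (1 - Lam η μ₀ β ν) * gA α ν s) * t :=
    mul_nonneg (mul_nonneg (div_nonneg hβ h1.le) (hgA s hs)) ht.1
  have h3 : 0 ≤ (μ₀ / (1 - Lam η μ₀ β ν)) * (t * G α η s) :=
    mul_nonneg (div_nonneg hμ h1.le)
      (mul_nonneg ht.1 (G_nonneg hα (Ioo_subset_Icc_self hη) hs))
  have h4 := G_nonneg hα ht hs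
  linarith

lemma Hker_le_Phi (hα : 2 < α) (hη : η ∈ Ioo (0:ℝ) 1) (hμ : 0 ≤ μ₀) (hβ : 0 ≤ β)
    (hΛ₁ : Lam η μ₀ β ν < 1) (hgA : ∀ s ∈ Icc (0:ℝ) 1, 0 ≤ gA α ν s)
    {t s : ℝ} (ht : t ∈ Icc (0:ℝ) 1) (hs : s ∈ Icc (0:ℝ) 1) :
    Hker α η μ₀ β ν t s ≤ Phi α η μ₀ β ν s := by
  have h1 : (0:ℝ) < 1 - Lam η μ₀ β ν := by linarith
  rw [Hker_expand, Phi_expand hΛ₁]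
  set A := β / (1 - Lam η μ₀ β ν) * gA α ν s with hA
  set c := μ₀ / (1 - Lam η μ₀ β ν) with hc
  have hA0 : 0 ≤ A := mul_nonneg (div_nonneg hβ h1.le) (hgA s hs)
  have hc0 : 0 ≤ c := div_nonneg hμ h1.le
  have e1 : A * t ≤ A := mul_le_of_le_one_right hA0 ht.2
  have e2 : t * G α η s ≤ Psi α s := by
    have g1 : t * G α η s ≤ 1 * G α η s :=
      mul_le_mul_of_nonneg_right ht.2 (G_nonneg hα (Ioo_subset_Icc_self hη) hs)
    have g2 := G_le_Psi hα (Ioo_subset_Icc_self hη) hs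
    linarith
  have e2' : c * (t * G α η s) ≤ c * Psi α s := mul_le_mul_of_nonneg_left e2 hc0
  have e3 := G_le_Psi hα ht hs
  linarith

lemma Hker_ge (hα : 2 < α) (hη : η ∈ Ioo (0:ℝ) 1) (hμ : 0 ≤ μ₀) (hβ : 0 ≤ β)
    (hΛ₁ : Lam η μ₀ β ν < 1) (hgA : ∀ s ∈ Icc (0:ℝ) 1, 0 ≤ gA α ν s)
    {t s : ℝ} (ht : t ∈ Icc (0:ℝ) 1) (hs : s ∈ Icc (0:ℝ) 1) :
    rho α η t * Phi α η μ₀ β ν s ≤ Hker α η μ₀ β ν t s := by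
  have h1 : (0:ℝ) < 1 - Lam η μ₀ β ν := by linarith
  rw [Hker_expand, Phi_expand hΛ₁]
  set A := β / (1 - Lam η μ₀ β ν) * gA α ν s with hA
  set c := μ₀ / (1 - Lam η μ₀ β ν) with hc
  have hA0 : 0 ≤ A := mul_nonneg (div_nonneg hβ h1.le) (hgA s hs)
  have hc0 : 0 ≤ c := div_nonneg hμ h1.le
  have hP0 := Psi_nonneg hα hs
  -- term 1
  have e1 : A * rho α η t ≤ A * t := mul_le_mul_of_nonneg_left (rho_le_self hα hη ht) hA0
  -- term 2
  have g1 : rho α η t * Psi α s ≤ ((η - η ^ (α-1)) * t) * Psi α s :=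
    mul_le_mul_of_nonneg_right (rho_sub_le hα hη ht) hP0
  have g2 : (η - η ^ (α-1)) * Psi α s ≤ G α η s := G_ge hα (Ioo_subset_Icc_self hη) hs
  have g3 : t * ((η - η ^ (α-1)) * Psi α s) ≤ t * G α η s :=
    mul_le_mul_of_nonneg_left g2 ht.1
  have g4 : rho α η t * Psi α s ≤ t * G α η s := by nlinarith
  have e2 : c * (rho α η t * Psi α s) ≤ c * (t * G α η s) :=
    mul_le_mul_of_nonneg_left g4 hc0
  -- term 3
  have k1 : rho α η t * Psi α s ≤ (t - t ^ (α-1)) * Psi α s :=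
    mul_le_mul_of_nonneg_right (rho_le_sub hα hη ht) hP0
  have e3 : rho α η t * Psi α s ≤ G α t s := le_trans k1 (G_ge hα ht hs)
  nlinarith [e1, e2, e3]

/-! ### integrability and tau facts -/

lemma Phi_int (hα : 2 < α) :
    IntegrableOn (Phi α η μ₀ β ν) (Icc (0:ℝ) 1) volume :=
  (Phi_contOn ν hα).integrableOn_compact isCompact_Icc

lemma qq_int (hα : 2 < α) :
    IntegrableOn (qq α η μ₀ β ν) (Icc (0:ℝ) 1) volume :=
  (qq_contOn ν hα).integrableOn_compact isCompact_Icc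

lemma rhoPhi_int (hα : 2 < α) :
    IntegrableOn (fun t => rho α η t * Phi α η μ₀ β ν t) (Icc (0:ℝ) 1) volume :=
  ((rho_continuous hα).continuousOn.mul (Phi_contOn ν hα)).integrableOn_compact isCompact_Icc

lemma rhoPsi_int (hα : 2 < α) :
    IntegrableOn (fun t => rho α η t * Psi α t) (Icc (0:ℝ) 1) volume :=
  ((rho_continuous (η := η) hα).mul (Psi_continuous hα)).continuousOn.integrableOn_compact
    isCompact_Icc

lemma tau2_nonneg (hα : 2 < α) (hη : η ∈ Ioo (0:ℝ) 1) (hμ : 0 ≤ μ₀) (hβ : 0 ≤ β)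
    (hΛ₁ : Lam η μ₀ β ν < 1) (hgA : ∀ s ∈ Icc (0:ℝ) 1, 0 ≤ gA α ν s) :
    0 ≤ tau2 α η μ₀ β ν :=
  setIntegral_nonneg measurableSet_Icc (fun s hs => Phi_nonneg hα hη hμ hβ hΛ₁ hgA hs)

lemma int_qq_le_tau2 (hα : 2 < α) (hη : η ∈ Ioo (0:ℝ) 1) (hμ : 0 ≤ μ₀)
    (hΛ₁ : Lam η μ₀ β ν < 1) :
    ∫ s in Icc (0:ℝ) 1, qq α η μ₀ β ν s ≤ tau2 α η μ₀ β ν :=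
  setIntegral_mono_on (qq_int hα) (Phi_int hα) measurableSet_Icc
    (fun s hs => qq_le_Phi hα hη hμ hΛ₁ hs)

lemma tau1_pos (hα : 2 < α) (hη : η ∈ Ioo (0:ℝ) 1) (hμ : 0 ≤ μ₀) (hβ : 0 ≤ β)
    (hΛ₁ : Lam η μ₀ β ν < 1) (hgA : ∀ s ∈ Icc (0:ℝ) 1, 0 ≤ gA α ν s) :
    0 < tau1 α η μ₀ β ν := by
  have step1 : ∫ t in Icc (0:ℝ) 1, rho α η t * Psi α t ≤ tau1 α η μ₀ β ν := by
    unfold tau1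
    apply setIntegral_mono_on (rhoPsi_int hα) (rhoPhi_int hα) measurableSet_Icc
    intro t ht
    exact mul_le_mul_of_nonneg_left (Psi_le_Phi hα hμ hβ hΛ₁ hgA ht)
      (rho_mem hα hη ht).1
  obtain ⟨t₀, ht₀, hmin⟩ := (isCompact_Icc (a := (1/4:ℝ)) (b := 3/4)).exists_isMinOn
    (nonempty_Icc.2 (by norm_num))
    ((rho_continuous (η := η) hα).mul (Psi_continuous hα)).continuousOn
  set m := rho α η t₀ * Psi α t₀ with hm_def
  have ht₀' : t₀ ∈ Ioo (0:ℝ) 1 := ⟨by linarith [ht₀.1], by linarith [ht₀.2]⟩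
  have hm : 0 < m := mul_pos (rho_pos hα hη ht₀')
    (Psi_pos hα ⟨(Ioo_subset_Icc_self ht₀').1, ht₀'.2⟩)
  have hsub : Icc (1/4:ℝ) (3/4) ⊆ Icc (0:ℝ) 1 := Icc_subset_Icc (by norm_num) (by norm_num)
  have step2 : m * (1/2) ≤ ∫ t in Icc (1/4:ℝ) (3/4), rho α η t * Psi α t := by
    have hc : IntegrableOn (fun _ : ℝ => m) (Icc (1/4:ℝ) (3/4)) volume := by
      refine integrableOn_const ?_
      exact measure_Icc_lt_top.ne
    have hmono := setIntegral_mono_on hc ((rhoPsi_int (η := η) hα).mono_set hsub)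
      measurableSet_Icc (fun t ht => isMinOn_iff.1 hmin t ht)
    rw [setIntegral_const] at hmono
    rw [measureReal_def, Real.volume_Icc] at hmono
    rw [show (3/4:ℝ) - 1/4 = 1/2 by norm_num] at hmono
    rw [ENNReal.toReal_ofReal (by norm_num)] at hmono
    calc m * (1/2) = (1/2:ℝ) • m := by rw [smul_eq_mul]; ring
      _ ≤ _ := hmono
  have step3 : ∫ t in Icc (1/4:ℝ) (3/4), rho α η t * Psi α t
      ≤ ∫ t in Icc (0:ℝ) 1, rho α η t * Psi α t := by
    apply setIntegral_mono_set (rhoPsi_int hα)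
    · filter_upwards [ae_restrict_mem measurableSet_Icc] with t ht
      exact mul_nonneg (rho_mem hα hη ht).1 (Psi_nonneg hα ht)
    · exact HasSubset.Subset.eventuallyLE hsub
  linarith

lemma b_pos_of {b τ : ℝ} (hb : 1 ≤ b * τ) (hτ : 0 < τ) : 0 < b := by nlinarith

end Bounds

/-! ### truncation and Lipschitz approximation -/

noncomputable def projI (t : ℝ) : ℝ := max 0 (min t 1)

lemma projI_mem (t : ℝ) : projI t ∈ Icc (0:ℝ) 1 :=
  ⟨le_max_left _ _, max_le (by norm_num) (min_le_right _ _)⟩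

lemma projI_eq_self {t : ℝ} (ht : t ∈ Icc (0:ℝ) 1) : projI t = t := by
  unfold projI
  rw [min_eq_left ht.2, max_eq_right ht.1]

lemma projI_continuous : Continuous projI :=
  continuous_const.max (continuous_id.min continuous_const)

lemma abs_min_sub_min (a b c : ℝ) : |min a c - min b c| ≤ |a - b| := by
  have h1 := le_abs_self (a - b)
  have h2 := neg_abs_le (a - b)
  rcases le_total a c with ha|ha <;> rcases le_total b c with hb|hb <;>
    rw [abs_sub_le_iff] <;> constructor <;>
    simp only [min_eq_left, min_eq_right, ha, hb] <;> linarith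

lemma abs_max0_sub_max0 (a b : ℝ) : |max 0 a - max 0 b| ≤ |a - b| := by
  rw [max_comm 0 a, max_comm 0 b]
  exact abs_max_sub_max_le_abs a b 0

lemma projI_lip (t t' : ℝ) : |projI t - projI t'| ≤ |t - t'| := by
  unfold projI
  exact le_trans (abs_max0_sub_max0 _ _) (abs_min_sub_min _ _ _)

noncomputable def projX (X x : ℝ) : ℝ := max 0 (min x X)

lemma projX_mem {X : ℝ} (hX : 0 ≤ X) (x : ℝ) : projX X x ∈ Icc (0:ℝ) X :=
  ⟨le_max_left _ _, max_le hX (min_le_right _ _)⟩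

lemma projX_nonneg (X x : ℝ) : 0 ≤ projX X x := le_max_left _ _

lemma projX_eq_self {X x : ℝ} (h0 : 0 ≤ x) (h1 : x ≤ X) : projX X x = x := by
  unfold projX
  rw [min_eq_left h1, max_eq_right h0]

lemma projX_le_max (X x : ℝ) : projX X x ≤ max x 0 := by
  unfold projX
  rw [max_comm 0 (min x X)]
  exact max_le_max (min_le_left _ _) le_rfl

lemma projX_lip (X x x' : ℝ) : |projX X x - projX X x'| ≤ |x - x'| := by
  unfold projX
  exact le_trans (abs_max0_sub_max0 _ _) (abs_min_sub_min _ _ _)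

/-- Truncated nonlinearity, defined on all of `ℝ × ℝ`. -/
noncomputable def FF (f : ℝ → ℝ → ℝ) (X t x : ℝ) : ℝ := f (projI t) (projX X x)

section Approx

variable {f : ℝ → ℝ → ℝ} {X : ℝ}

lemma FF_cont (hf : ContinuousOn (fun p : ℝ × ℝ => f p.1 p.2) (Icc (0:ℝ) 1 ×ˢ Ici (0:ℝ))) :
    Continuous fun p : ℝ × ℝ => FF f X p.1 p.2 := by
  have : (fun p : ℝ × ℝ => FF f X p.1 p.2)
      = (fun p : ℝ × ℝ => f p.1 p.2) ∘ (fun p : ℝ × ℝ => (projI p.1, projX X p.2)) := rfl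
  rw [this]
  apply hf.comp_continuous
  · exact (projI_continuous.comp continuous_fst).prodMk
      ((continuous_const.max (continuous_snd.min continuous_const)))
  · intro p
    exact ⟨projI_mem _, projX_nonneg _ _⟩

lemma FF_cont_t (hf : ContinuousOn (fun p : ℝ × ℝ => f p.1 p.2) (Icc (0:ℝ) 1 ×ˢ Ici (0:ℝ)))
    (x : ℝ) : Continuous fun t : ℝ => FF f X t x :=
  (FF_cont hf).comp (continuous_id.prodMk continuous_const)

lemma FF_nonneg (hfpos : ∀ t ∈ Icc (0:ℝ) 1, ∀ x : ℝ, 0 ≤ x → 0 ≤ f t x) (t x : ℝ) :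
    0 ≤ FF f X t x :=
  hfpos _ (projI_mem t) _ (projX_nonneg _ _)

lemma FF_le {a c : ℝ} (ha : 0 < a)
    (hC1 : ∀ t ∈ Icc (0:ℝ) 1, ∀ x : ℝ, 0 ≤ x → f t x ≤ a * x + c) (t x : ℝ) :
    FF f X t x ≤ a * max x 0 + c := by
  have h := hC1 _ (projI_mem t) _ (projX_nonneg X x)
  have h2 := projX_le_max X x
  unfold FF
  nlinarith [mul_le_mul_of_nonneg_left h2 ha.le]

lemma FF_le' {a c : ℝ} (ha : 0 < a) (hX : 0 ≤ X)
    (hC1 : ∀ t ∈ Icc (0:ℝ) 1, ∀ x : ℝ, 0 ≤ x → f t x ≤ a * x + c) (t x : ℝ) :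
    FF f X t x ≤ a * X + c := by
  have h := hC1 _ (projI_mem t) _ (projX_nonneg X x)
  have h2 := (projX_mem hX x).2
  unfold FF
  nlinarith [mul_le_mul_of_nonneg_left h2 ha.le]

lemma FF_lb {b δ : ℝ} (hδX : δ ≤ X)
    (hC2 : ∀ t ∈ Icc (0:ℝ) 1, ∀ x : ℝ, 0 ≤ x → x ≤ δ → b * x ≤ f t x)
    (t : ℝ) {x : ℝ} (h0 : 0 ≤ x) (h1 : x ≤ δ) : b * x ≤ FF f X t x := by
  have hx : projX X x = x := projX_eq_self h0 (le_trans h1 hδX)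
  unfold FF
  rw [hx]
  exact hC2 _ (projI_mem t) _ h0 h1

lemma FF_eq {t x : ℝ} (ht : t ∈ Icc (0:ℝ) 1) (h0 : 0 ≤ x) (h1 : x ≤ X) :
    FF f X t x = f t x := by
  unfold FF
  rw [projI_eq_self ht, projX_eq_self h0 h1]

lemma FF_ucx (hf : ContinuousOn (fun p : ℝ × ℝ => f p.1 p.2) (Icc (0:ℝ) 1 ×ˢ Ici (0:ℝ)))
    (hX : 0 ≤ X) {ε : ℝ} (hε : 0 < ε) :
    ∃ d > 0, ∀ t x x', |x - x'| ≤ d → |FF f X t x - FF f X t x'| ≤ ε := by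
  have hK : IsCompact (Icc (0:ℝ) 1 ×ˢ Icc (0:ℝ) X) := isCompact_Icc.prod isCompact_Icc
  have hsub : (Icc (0:ℝ) 1 ×ˢ Icc (0:ℝ) X) ⊆ Icc (0:ℝ) 1 ×ˢ Ici (0:ℝ) :=
    prod_mono subset_rfl Icc_subset_Ici_self
  have huc := hK.uniformContinuousOn_of_continuous (hf.mono hsub)
  rw [Metric.uniformContinuousOn_iff] at huc
  obtain ⟨d, hd, hduc⟩ := huc ε hε
  refine ⟨d/2, by linarith, ?_⟩
  intro t x x' hxx
  have hm1 : (projI t, projX X x) ∈ Icc (0:ℝ) 1 ×ˢ Icc (0:ℝ) X :=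
    ⟨projI_mem t, projX_mem hX x⟩
  have hm2 : (projI t, projX X x') ∈ Icc (0:ℝ) 1 ×ˢ Icc (0:ℝ) X :=
    ⟨projI_mem t, projX_mem hX x'⟩
  have hdist : dist ((projI t, projX X x) : ℝ × ℝ) (projI t, projX X x') < d := by
    rw [Prod.dist_eq]
    apply max_lt
    · rw [Real.dist_eq]; simp only [sub_self, abs_zero]; linarith
    · rw [Real.dist_eq]
      calc |projX X x - projX X x'| ≤ |x - x'| := projX_lip X x x'
        _ ≤ d/2 := hxx
        _ < d := by linarith
  have := hduc _ hm1 _ hm2 hdist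
  rw [Real.dist_eq] at this
  exact this.le

/-- Lipschitz (inf-convolution style) approximation of `FF`, with a countable infimum
for easy measurability. -/
noncomputable def gm (f : ℝ → ℝ → ℝ) (X : ℝ) (m : ℕ) (t x : ℝ) : ℝ :=
  ⨅ y : ℚ, (FF f X t (y:ℝ) + (m:ℝ) * |x - (y:ℝ)|)

lemma gm_bddBelow (hfpos : ∀ t ∈ Icc (0:ℝ) 1, ∀ x : ℝ, 0 ≤ x → 0 ≤ f t x) (m : ℕ) (t x : ℝ) :
    BddBelow (range fun y : ℚ => FF f X t (y:ℝ) + (m:ℝ) * |x - (y:ℝ)|) := by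
  refine ⟨0, ?_⟩
  rintro z ⟨y, rfl⟩
  exact add_nonneg (FF_nonneg hfpos _ _) (by positivity)

lemma gm_le (hfpos : ∀ t ∈ Icc (0:ℝ) 1, ∀ x : ℝ, 0 ≤ x → 0 ≤ f t x) (m : ℕ) (t x : ℝ)
    (y : ℚ) : gm f X m t x ≤ FF f X t (y:ℝ) + (m:ℝ) * |x - (y:ℝ)| :=
  ciInf_le (gm_bddBelow hfpos m t x) y

lemma gm_nonneg (hfpos : ∀ t ∈ Icc (0:ℝ) 1, ∀ x : ℝ, 0 ≤ x → 0 ≤ f t x) (m : ℕ) (t x : ℝ) :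
    0 ≤ gm f X m t x :=
  le_ciInf fun y => add_nonneg (FF_nonneg hfpos _ _) (by positivity)

lemma gm_le_FF (hf : ContinuousOn (fun p : ℝ × ℝ => f p.1 p.2) (Icc (0:ℝ) 1 ×ˢ Ici (0:ℝ)))
    (hfpos : ∀ t ∈ Icc (0:ℝ) 1, ∀ x : ℝ, 0 ≤ x → 0 ≤ f t x) (hX : 0 ≤ X)
    (m : ℕ) (t x : ℝ) : gm f X m t x ≤ FF f X t x := by
  apply le_of_forall_pos_le_add
  intro ε hε
  obtain ⟨d, hd, hbig⟩ := FF_ucx hf hX (half_pos hε)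
  set r := min d (ε / (2 * ((m:ℝ) + 1))) with hr
  have hr0 : 0 < r := lt_min hd (by positivity)
  obtain ⟨y, hy1, hy2⟩ := exists_rat_btwn (show x - r < x by linarith)
  have hyx : |x - (y:ℝ)| ≤ r := by
    rw [abs_le]; constructor <;> nlinarith
  calc gm f X m t x ≤ FF f X t (y:ℝ) + (m:ℝ) * |x - (y:ℝ)| := gm_le hfpos m t x y
    _ ≤ (FF f X t x + ε/2) + (m:ℝ) * |x - (y:ℝ)| := by
        have := hbig t (y:ℝ) x (by rw [abs_sub_comm] at hyx; exact le_trans hyx (min_le_left _ _))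
        have h2 := abs_le.1 this
        linarith [h2.1, h2.2]
    _ ≤ FF f X t x + ε := by
        have h3 : (m:ℝ) * |x - (y:ℝ)| ≤ (m:ℝ) * r :=
          mul_le_mul_of_nonneg_left hyx (Nat.cast_nonneg m)
        have h4 : r ≤ ε / (2 * ((m:ℝ) + 1)) := min_le_right _ _
        have h5 : (m:ℝ) * r ≤ (m:ℝ) * (ε / (2 * ((m:ℝ) + 1))) :=
          mul_le_mul_of_nonneg_left h4 (Nat.cast_nonneg m)
        have h6 : (m:ℝ) * (ε / (2 * ((m:ℝ) + 1))) ≤ ε/2 := by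
          rw [mul_div_assoc']
          rw [div_le_div_iff₀ (by positivity) (by norm_num : (0:ℝ) < 2)]
          nlinarith [Nat.cast_nonneg (α := ℝ) m]
        linarith
    
lemma gm_lip (hfpos : ∀ t ∈ Icc (0:ℝ) 1, ∀ x : ℝ, 0 ≤ x → 0 ≤ f t x) (m : ℕ) (t x x' : ℝ) :
    |gm f X m t x - gm f X m t x'| ≤ (m:ℝ) * |x - x'| := by
  have key : ∀ u v : ℝ, gm f X m t u ≤ gm f X m t v + (m:ℝ) * |u - v| := by
    intro u v
    rw [← sub_le_iff_le_add]
    apply le_ciInf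
    intro y
    have h1 := gm_le (X := X) hfpos m t u y
    have h2 : |u - (y:ℝ)| ≤ |v - (y:ℝ)| + |u - v| := by
      calc |u - (y:ℝ)| = |(v - (y:ℝ)) + (u - v)| := by ring_nf
        _ ≤ |v - (y:ℝ)| + |u - v| := abs_add_le _ _
    have h3 : (m:ℝ) * |u - (y:ℝ)| ≤ (m:ℝ) * |v - (y:ℝ)| + (m:ℝ) * |u - v| := by
      nlinarith [Nat.cast_nonneg (α := ℝ) m]
    linarith
  have h1 := key x x'
  have h2 := key x' x
  rw [abs_sub_comm x' x] at h2
  rw [abs_sub_le_iff]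
  constructor <;> linarith

lemma gm_lb {b δ : ℝ} (hb0 : 0 < b) (hδ : 0 < δ) (hδX : δ ≤ X)
    (hfpos : ∀ t ∈ Icc (0:ℝ) 1, ∀ x : ℝ, 0 ≤ x → 0 ≤ f t x)
    (hC2 : ∀ t ∈ Icc (0:ℝ) 1, ∀ x : ℝ, 0 ≤ x → x ≤ δ → b * x ≤ f t x)
    {m : ℕ} (hm : b ≤ (m:ℝ)) (t : ℝ) {x : ℝ} (h0 : 0 ≤ x) (h1 : x ≤ δ/2) :
    b * x ≤ gm f X m t x := by
  apply le_ciInf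
  intro y
  rcases lt_or_ge (y:ℝ) 0 with hy|hy
  · have h2 : (m:ℝ) * |x - (y:ℝ)| ≥ (m:ℝ) * x := by
      have : |x - (y:ℝ)| ≥ x := by rw [abs_of_nonneg (by linarith)]; linarith
      nlinarith
    have h3 := FF_nonneg (X := X) hfpos t (y:ℝ)
    nlinarith
  · rcases le_or_gt (y:ℝ) δ with hy2|hy2
    · have h2 : b * (y:ℝ) ≤ FF f X t (y:ℝ) := FF_lb hδX hC2 t hy hy2
      have h3 : (m:ℝ) * |x - (y:ℝ)| ≥ b * (x - (y:ℝ)) := by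
        have := le_abs_self (x - (y:ℝ))
        have habs := abs_nonneg (x - (y:ℝ))
        nlinarith
      linarith
    · have h2 : (m:ℝ) * |x - (y:ℝ)| ≥ b * x := by
        have : |x - (y:ℝ)| ≥ δ/2 := by
          rw [abs_of_nonpos (by linarith)]; linarith
        have habs := abs_nonneg (x - (y:ℝ))
        nlinarith
      have h3 := FF_nonneg (X := X) hfpos t (y:ℝ)
      linarith

lemma gm_ge_FF_sub {a c : ℝ} (ha : 0 < a) (hc : 0 < c)
    (hf : ContinuousOn (fun p : ℝ × ℝ => f p.1 p.2) (Icc (0:ℝ) 1 ×ˢ Ici (0:ℝ)))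
    (hfpos : ∀ t ∈ Icc (0:ℝ) 1, ∀ x : ℝ, 0 ≤ x → 0 ≤ f t x) (hX : 0 ≤ X)
    (hC1 : ∀ t ∈ Icc (0:ℝ) 1, ∀ x : ℝ, 0 ≤ x → f t x ≤ a * x + c)
    {ε : ℝ} (hε : 0 < ε) :
    ∃ M : ℕ, ∀ m : ℕ, M ≤ m → ∀ t x, FF f X t x - ε ≤ gm f X m t x := by
  obtain ⟨d, hd, hbig⟩ := FF_ucx hf hX hε
  set MF := a * X + c with hMF
  have hMF0 : 0 < MF := by nlinarith
  refine ⟨⌈MF / d⌉₊, ?_⟩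
  intro m hm t x
  apply le_ciInf
  intro y
  rcases le_or_gt |x - (y:ℝ)| d with hcase|hcase
  · have h1 := hbig t x (y:ℝ) hcase
    have h2 := (abs_le.1 h1).2
    have h3 : (0:ℝ) ≤ (m:ℝ) * |x - (y:ℝ)| := by positivity
    linarith
  · have h1 : (MF / d) ≤ (m:ℝ) := le_trans (Nat.le_ceil _) (Nat.cast_le.2 hm)
    have h2 : MF ≤ (m:ℝ) * d := by
      rw [div_le_iff₀ hd] at h1; linarith
    have h3 : (m:ℝ) * d ≤ (m:ℝ) * |x - (y:ℝ)| :=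
      mul_le_mul_of_nonneg_left hcase.le (Nat.cast_nonneg m)
    have h4 := FF_nonneg (X := X) hfpos t (y:ℝ)
    have h5 := FF_le' ha hX hC1 t x
    linarith

lemma gm_meas (hf : ContinuousOn (fun p : ℝ × ℝ => f p.1 p.2) (Icc (0:ℝ) 1 ×ˢ Ici (0:ℝ)))
    (m : ℕ) {u : ℝ → ℝ} (hu : Continuous u) :
    Measurable fun s => gm f X m s (u s) := by
  apply Measurable.iInf
  intro y
  apply Measurable.add
  · exact (FF_cont_t hf (y:ℝ)).measurable
  · exact (continuous_const.mul ((hu.sub continuous_const).abs)).measurable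

end Approx

/-! ### the Volterra shooting construction -/

section Volterra

open BoundedContinuousFunction Function intervalIntegral

set_option maxHeartbeats 1000000 in
lemma volterra_shoot (α : ℝ) (hα : 2 < α)
    (q w : ℝ → ℝ) (g : ℝ → ℝ → ℝ) (m Mg aa cc : ℝ)
    (hq : IntegrableOn q (Icc (0:ℝ) 1) volume)
    (hq0 : ∀ s ∈ Icc (0:ℝ) 1, 0 ≤ q s)
    (hw : Continuous w) (hw0 : ∀ t, 0 ≤ w t) (hw1 : ∀ t, w t ≤ 1)
    (hm : 0 ≤ m) (hMg : 0 ≤ Mg)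
    (hgmeas : ∀ u : ℝ → ℝ, Continuous u → Measurable fun s => g s (u s))
    (hg0 : ∀ s x, 0 ≤ g s x)
    (hgb : ∀ s x, g s x ≤ Mg)
    (hglip : ∀ s x x', |g s x - g s x'| ≤ m * |x - x'|)
    (hgrow : ∀ s x, g s x ≤ aa * max x 0 + cc)
    (haa : 0 < aa) (hcc : 0 < cc)
    (hA : aa * (∫ s in Icc (0:ℝ) 1, q s) < 1) :
    ∃ (u : ℝ →ᵇ ℝ) (lam : ℝ), 0 ≤ lam ∧
      (∀ t : ℝ, u t = lam * projI t + w (projI t)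
          - ∫ s in Icc (0:ℝ) 1, Kk α (projI t) s * g s (u s)) ∧
      lam = ∫ s in Icc (0:ℝ) 1, q s * g s (u s) := by
  classical
  have hΓ : 0 < Real.Gamma α := Gamma_pos hα
  have hvol : volume (Icc (0:ℝ) 1) = 1 := by rw [Real.volume_Icc]; norm_num
  have hvol' : (volume (Icc (0:ℝ) 1)).toReal = 1 := by rw [hvol]; simp
  have hvollt : volume (Icc (0:ℝ) 1) < ⊤ := by rw [hvol]; exact ENNReal.one_lt_top
  have hgu : ∀ u : ℝ →ᵇ ℝ,
      AEStronglyMeasurable (fun s => g s (u s)) (volume.restrict (Icc (0:ℝ) 1)) :=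
    fun u => ((hgmeas u u.continuous).aestronglyMeasurable)
  have hgabs : ∀ (u : ℝ →ᵇ ℝ) (s : ℝ), ‖g s (u s)‖ ≤ Mg := fun u s => by
    rw [Real.norm_eq_abs, abs_of_nonneg (hg0 _ _)]; exact hgb _ _
  have hKcont : ∀ τ : ℝ, Continuous fun s => Kk α τ s :=
    fun τ => (Kk_continuous hα).comp (continuous_const.prodMk continuous_id)
  have hKint : ∀ τ : ℝ, IntegrableOn (fun s => Kk α τ s) (Icc (0:ℝ) 1) volume :=
    fun τ => (hKcont τ).continuousOn.integrableOn_compact isCompact_Icc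
  have hint : ∀ (u : ℝ →ᵇ ℝ) (τ : ℝ),
      IntegrableOn (fun s => Kk α τ s * g s (u s)) (Icc (0:ℝ) 1) volume := by
    intro u τ
    have h := (hKint τ).integrable.bdd_mul (hgu u) (ae_of_all _ (hgabs u))
    have he : (fun s => Kk α τ s * g s (u s)) = fun s => g s (u s) * Kk α τ s := by
      funext s; ring
    rw [IntegrableOn, he]
    exact h
  have hqg : ∀ u : ℝ →ᵇ ℝ,
      IntegrableOn (fun s => q s * g s (u s)) (Icc (0:ℝ) 1) volume := by
    intro u
    have h := hq.integrable.bdd_mul (hgu u) (ae_of_all _ (hgabs u))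
    have he : (fun s => q s * g s (u s)) = fun s => g s (u s) * q s := by
      funext s; ring
    rw [IntegrableOn, he]
    exact h
  set J : (ℝ →ᵇ ℝ) → ℝ → ℝ :=
    fun u τ => ∫ s in Icc (0:ℝ) 1, Kk α τ s * g s (u s) with hJ
  have hJ0 : ∀ u τ, 0 ≤ J u τ := fun u τ =>
    setIntegral_nonneg measurableSet_Icc (fun s _ => mul_nonneg (Kk_nonneg hα _ _) (hg0 _ _))
  have hJb : ∀ (u : ℝ →ᵇ ℝ) (τ : ℝ), τ ∈ Icc (0:ℝ) 1 → J u τ ≤ Mg / Real.Gamma α := by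
    intro u τ hτ
    have hb := norm_setIntegral_le_of_norm_le_const (f := fun s => Kk α τ s * g s (u s)) (C := Mg / Real.Gamma α) hvollt ?_
    · rw [Real.norm_eq_abs, measureReal_def, hvol', mul_one] at hb
      exact le_trans (le_abs_self _) hb
    · intro s hs
      rw [Real.norm_eq_abs, abs_of_nonneg (mul_nonneg (Kk_nonneg hα _ _) (hg0 _ _))]
      calc Kk α τ s * g s (u s) ≤ (1/Real.Gamma α) * Mg :=
          mul_le_mul (Kk_le hα hτ hs.1) (hgb _ _) (hg0 _ _) (by positivity)
        _ = Mg / Real.Gamma α := by ring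
  have hJsub : ∀ (u v : ℝ →ᵇ ℝ) (τ : ℝ), J u τ - J v τ
      = ∫ s in Icc (0:ℝ) 1, Kk α τ s * (g s (u s) - g s (v s)) := by
    intro u v τ
    simp only [hJ]
    rw [← integral_sub (hint u τ).integrable (hint v τ).integrable]
    congr 1; funext s; ring
  have hintd : ∀ (u v : ℝ →ᵇ ℝ) (τ : ℝ),
      IntegrableOn (fun s => Kk α τ s * (g s (u s) - g s (v s))) (Icc (0:ℝ) 1) volume := by
    intro u v τ
    have h := (hint u τ).integrable.sub (hint v τ).integrable
    have he : (fun s => Kk α τ s * (g s (u s) - g s (v s)))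
        = fun s => Kk α τ s * g s (u s) - Kk α τ s * g s (v s) := by funext s; ring
    rw [IntegrableOn, he]
    exact h
  have hJdiff : ∀ (u v : ℝ →ᵇ ℝ) (τ : ℝ), τ ∈ Icc (0:ℝ) 1 →
      |J u τ - J v τ| ≤ (m / Real.Gamma α) * dist u v := by
    intro u v τ hτ
    rw [hJsub u v τ]
    have hb := norm_setIntegral_le_of_norm_le_const (f := fun s => Kk α τ s * (g s (u s) - g s (v s))) (C := (m / Real.Gamma α) * dist u v)
      hvollt ?_
    · rw [Real.norm_eq_abs, measureReal_def, hvol', mul_one] at hb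
      exact hb
    · intro s hs
      rw [Real.norm_eq_abs, abs_mul]
      have h1 : |Kk α τ s| ≤ 1/Real.Gamma α := by
        rw [abs_of_nonneg (Kk_nonneg hα _ _)]; exact Kk_le hα hτ hs.1
      have h2 : |g s (u s) - g s (v s)| ≤ m * dist u v := by
        have h3 := hglip s (u s) (v s)
        have h4 : |u s - v s| ≤ dist u v := by
          have := BoundedContinuousFunction.dist_coe_le_dist (f := u) (g := v) s
          rwa [Real.dist_eq] at this
        nlinarith [abs_nonneg (u s - v s)]
      calc |Kk α τ s| * |g s (u s) - g s (v s)| ≤ (1/Real.Gamma α) * (m * dist u v) :=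
          mul_le_mul h1 h2 (abs_nonneg _) (by positivity)
        _ = (m / Real.Gamma α) * dist u v := by ring
  have hJlipt : ∀ (u : ℝ →ᵇ ℝ) {τ τ' : ℝ}, τ ∈ Icc (0:ℝ) 1 → τ' ∈ Icc (0:ℝ) 1 →
      |J u τ - J u τ'| ≤ (Mg * (α-1) / Real.Gamma α) * |τ - τ'| := by
    intro u τ τ' hτ hτ'
    have hsub : J u τ - J u τ'
        = ∫ s in Icc (0:ℝ) 1, (Kk α τ s - Kk α τ' s) * g s (u s) := by
      simp only [hJ]
      rw [← integral_sub (hint u τ).integrable (hint u τ').integrable]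
      congr 1; funext s; ring
    rw [hsub]
    have hmeas : AEStronglyMeasurable (fun s => (Kk α τ s - Kk α τ' s) * g s (u s))
        (volume.restrict (Icc (0:ℝ) 1)) :=
      (((hKcont τ).sub (hKcont τ')).aestronglyMeasurable).mul (hgu u)
    have hb := norm_setIntegral_le_of_norm_le_const (f := fun s => (Kk α τ s - Kk α τ' s) * g s (u s))
      (C := (Mg * (α-1) / Real.Gamma α) * |τ - τ'|) hvollt ?_
    · rw [Real.norm_eq_abs, measureReal_def, hvol', mul_one] at hb
      exact hb
    · intro s hs
      rw [Real.norm_eq_abs, abs_mul]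
      have h1 := Kk_lip_t hα hτ hτ' hs
      have h2 : |g s (u s)| ≤ Mg := hgabs u s
      calc |Kk α τ s - Kk α τ' s| * |g s (u s)|
          ≤ (((α-1)/Real.Gamma α) * |τ - τ'|) * Mg := by
            apply mul_le_mul h1 h2 (abs_nonneg _)
            apply mul_nonneg (div_nonneg (by linarith) hΓ.le) (abs_nonneg _)
        _ = (Mg * (α-1) / Real.Gamma α) * |τ - τ'| := by ring
  -- the operator
  have hΘex : ∀ (lam : ℝ) (u : ℝ →ᵇ ℝ), ∃ v : ℝ →ᵇ ℝ,
      ∀ t, v t = lam * projI t + w (projI t) - J u (projI t) := by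
    intro lam u
    have hcont : Continuous fun t => lam * projI t + w (projI t) - J u (projI t) := by
      apply Continuous.sub
      · exact (continuous_const.mul projI_continuous).add (hw.comp projI_continuous)
      · have hL : LipschitzWith (Real.toNNReal (Mg * (α-1) / Real.Gamma α))
            (fun t => J u (projI t)) := by
          apply LipschitzWith.of_dist_le_mul
          intro x y
          rw [Real.dist_eq, Real.dist_eq]
          calc |J u (projI x) - J u (projI y)|
              ≤ (Mg * (α-1) / Real.Gamma α) * |projI x - projI y| :=
                hJlipt u (projI_mem x) (projI_mem y)
            _ ≤ (Real.toNNReal (Mg * (α-1) / Real.Gamma α) : ℝ) * |x - y| := by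
                apply mul_le_mul (Real.le_coe_toNNReal _) (projI_lip x y) (abs_nonneg _)
                  (NNReal.coe_nonneg _)
        exact hL.continuous
    refine ⟨BoundedContinuousFunction.mkOfBound ⟨_, hcont⟩
      (2*(|lam| + 1 + Mg / Real.Gamma α)) ?_, fun t => rfl⟩
    intro x y
    rw [Real.dist_eq]
    have key : ∀ z : ℝ, |lam * projI z + w (projI z) - J u (projI z)|
        ≤ |lam| + 1 + Mg / Real.Gamma α := by
      intro z
      have hpz := projI_mem z
      have h1 : |lam * projI z| ≤ |lam| := by
        rw [abs_mul, abs_of_nonneg hpz.1]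
        nlinarith [abs_nonneg lam, hpz.2, hpz.1]
      have h2 : |w (projI z)| ≤ 1 := by
        rw [abs_of_nonneg (hw0 _)]; exact hw1 _
      have h3 : |J u (projI z)| ≤ Mg / Real.Gamma α := by
        rw [abs_of_nonneg (hJ0 _ _)]; exact hJb u _ hpz
      calc |lam * projI z + w (projI z) - J u (projI z)|
          ≤ |lam * projI z + w (projI z)| + |J u (projI z)| := abs_sub _ _
        _ ≤ (|lam * projI z| + |w (projI z)|) + |J u (projI z)| := by
            have := abs_add_le (lam * projI z) (w (projI z)); linarith
        _ ≤ |lam| + 1 + Mg / Real.Gamma α := by linarith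
    have hx := key x
    have hy := key y
    have := abs_sub (lam * projI x + w (projI x) - J u (projI x))
      (lam * projI y + w (projI y) - J u (projI y))
    simp only [ContinuousMap.coe_mk]
    linarith
  choose Θ hΘ using hΘex
  -- pointwise contraction estimate
  have key1 : ∀ (lam : ℝ) (n : ℕ) (u v : ℝ →ᵇ ℝ) (t : ℝ),
      |((Θ lam)^[n] u) t - ((Θ lam)^[n] v) t|
        ≤ dist u v * (m / Real.Gamma α)^n * (projI t)^n / n.factorial := by
    intro lam n
    induction n with
    | zero =>
      intro u v t
      simp only [Function.iterate_zero_apply, pow_zero, Nat.factorial_zero, Nat.cast_one,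
        mul_one, div_one]
      have := BoundedContinuousFunction.dist_coe_le_dist (f := u) (g := v) t
      rwa [Real.dist_eq] at this
    | succ n ih =>
      intro u v t
      rw [Function.iterate_succ_apply', Function.iterate_succ_apply']
      rw [hΘ, hΘ]
      set u' := (Θ lam)^[n] u with hu'
      set v' := (Θ lam)^[n] v with hv'
      have heq : (lam * projI t + w (projI t) - J u' (projI t))
          - (lam * projI t + w (projI t) - J v' (projI t)) = J v' (projI t) - J u' (projI t) := by
        ring
      rw [heq, abs_sub_comm, hJsub u' v' (projI t)]
      have hpt := projI_mem t
      set D := dist u v with hD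
      have hD0 : 0 ≤ D := dist_nonneg
      set Cn := D * (m / Real.Gamma α)^n / n.factorial with hCn
      have hCn0 : 0 ≤ Cn := by
        apply div_nonneg (mul_nonneg hD0 (pow_nonneg (by positivity) n)) (Nat.cast_nonneg _)
      have hptw : ∀ s ∈ Icc (0:ℝ) 1, |Kk α (projI t) s * (g s (u' s) - g s (v' s))|
          ≤ ((m/Real.Gamma α) * Cn) * (Icc (0:ℝ) (projI t)).indicator (fun z => z^n) s := by
        intro s hs
        rcases le_or_gt s (projI t) with hsle|hsgt
        · rw [Set.indicator_of_mem (show s ∈ Icc (0:ℝ) (projI t) from ⟨hs.1, hsle⟩)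
            (fun z => z^n), abs_mul]
          have hK0 : |Kk α (projI t) s| ≤ 1/Real.Gamma α := by
            rw [abs_of_nonneg (Kk_nonneg hα _ _)]; exact Kk_le hα hpt hs.1
          have hgd : |g s (u' s) - g s (v' s)| ≤ m * (Cn * s^n) := by
            have h1 := hglip s (u' s) (v' s)
            have h2 := ih u v s
            rw [projI_eq_self hs] at h2
            have h3 : |u' s - v' s| ≤ Cn * s^n := by
              rw [hCn]
              calc |u' s - v' s| ≤ D * (m / Real.Gamma α)^n * s^n / n.factorial := h2
                _ = D * (m / Real.Gamma α)^n / n.factorial * s^n := by ring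
            nlinarith [abs_nonneg (u' s - v' s)]
          have hs0 : (0:ℝ) ≤ s^n := pow_nonneg hs.1 n
          calc |Kk α (projI t) s| * |g s (u' s) - g s (v' s)|
              ≤ (1/Real.Gamma α) * (m * (Cn * s^n)) := by
                apply mul_le_mul hK0 hgd (abs_nonneg _) (by positivity)
            _ = ((m/Real.Gamma α) * Cn) * s^n := by ring
        · rw [Kk_eq_zero hα hsgt.le, indicator_of_notMem
            (fun hmem => absurd hmem.2 (not_le.2 hsgt))]
          simp
      have hbint : IntegrableOn
          (fun s => ((m/Real.Gamma α) * Cn) * (Icc (0:ℝ) (projI t)).indicator (fun z => z^n) s)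
          (Icc (0:ℝ) 1) volume := by
        apply Integrable.const_mul
        exact ((continuous_pow n).continuousOn.integrableOn_compact
          isCompact_Icc).integrable.indicator measurableSet_Icc
      have habs : |∫ s in Icc (0:ℝ) 1, Kk α (projI t) s * (g s (u' s) - g s (v' s))|
          ≤ ∫ s in Icc (0:ℝ) 1,
            ((m/Real.Gamma α) * Cn) * (Icc (0:ℝ) (projI t)).indicator (fun z => z^n) s := by
        calc |∫ s in Icc (0:ℝ) 1, Kk α (projI t) s * (g s (u' s) - g s (v' s))|
            ≤ ∫ s in Icc (0:ℝ) 1, |Kk α (projI t) s * (g s (u' s) - g s (v' s))| := by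
              have := MeasureTheory.norm_integral_le_integral_norm
                (μ := volume.restrict (Icc (0:ℝ) 1))
                (f := fun s => Kk α (projI t) s * (g s (u' s) - g s (v' s)))
              simp only [Real.norm_eq_abs] at this
              exact this
          _ ≤ _ := setIntegral_mono_on ((hintd u' v' (projI t)).integrable.abs) hbint
              measurableSet_Icc hptw
      have hcomp : (∫ s in Icc (0:ℝ) 1,
          ((m/Real.Gamma α) * Cn) * (Icc (0:ℝ) (projI t)).indicator (fun z => z^n) s)
          = ((m/Real.Gamma α) * Cn) * ((projI t)^(n+1) / (n+1)) := by
        rw [MeasureTheory.integral_const_mul, setIntegral_indicator measurableSet_Icc]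
        rw [inter_eq_self_of_subset_right (Icc_subset_Icc le_rfl hpt.2)]
        rw [integral_Icc_eq_integral_Ioc, ← intervalIntegral.integral_of_le hpt.1,
          integral_pow]
        norm_num
      have hfinal : ((m/Real.Gamma α) * Cn) * ((projI t)^(n+1) / (n+1))
          = D * (m / Real.Gamma α)^(n+1) * (projI t)^(n+1) / (n+1).factorial := by
        rw [hCn]
        have hfac : ((n+1).factorial : ℝ) = ((n:ℝ)+1) * (n.factorial : ℝ) := by
          rw [Nat.factorial_succ]; push_cast; ring
        rw [hfac]
        have h1 : (0:ℝ) < (n.factorial : ℝ) := by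
          exact_mod_cast Nat.factorial_pos n
        field_simp
        have hΓi : Real.Gamma α * (Real.Gamma α)⁻¹ = 1 := mul_inv_cancel₀ hΓ.ne'
        linear_combination (-(m * m ^ n * D * (Real.Gamma α)⁻¹ ^ n * projI t * projI t ^ n)) * hΓi
      calc |∫ s in Icc (0:ℝ) 1, Kk α (projI t) s * (g s (u' s) - g s (v' s))|
          ≤ ((m/Real.Gamma α) * Cn) * ((projI t)^(n+1) / (n+1)) := by rw [← hcomp]; exact habs
        _ = D * (m / Real.Gamma α)^(n+1) * (projI t)^(n+1) / (n+1).factorial := hfinal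
  have key1' : ∀ (lam : ℝ) (u v : ℝ →ᵇ ℝ) (n : ℕ),
      dist ((Θ lam)^[n] u) ((Θ lam)^[n] v)
        ≤ (m/Real.Gamma α)^n / n.factorial * dist u v := by
    intro lam u v n
    have hc0 : (0:ℝ) ≤ (m/Real.Gamma α)^n / n.factorial * dist u v := by
      apply mul_nonneg (div_nonneg (pow_nonneg (by positivity) n) (Nat.cast_nonneg _)) dist_nonneg
    rw [BoundedContinuousFunction.dist_le hc0]
    intro t
    rw [Real.dist_eq]
    have h1 := key1 lam n u v t
    have hpt := projI_mem t
    have h2 : (projI t)^n ≤ 1 := pow_le_one₀ hpt.1 hpt.2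
    have h3 : (0:ℝ) < (n.factorial : ℝ) := by exact_mod_cast Nat.factorial_pos n
    have h4 : dist u v * (m / Real.Gamma α)^n * (projI t)^n / n.factorial
        ≤ (m/Real.Gamma α)^n / n.factorial * dist u v := by
      rw [div_le_iff₀ h3]
      have h5 : (0:ℝ) ≤ (m/Real.Gamma α)^n := pow_nonneg (by positivity) n
      have h6 : (0:ℝ) ≤ (projI t)^n := pow_nonneg hpt.1 n
      have h7 : dist u v * (m / Real.Gamma α)^n * (projI t)^n
          ≤ dist u v * (m / Real.Gamma α)^n * 1 := by
        apply mul_le_mul_of_nonneg_left h2 (mul_nonneg dist_nonneg h5)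
      calc dist u v * (m / Real.Gamma α)^n * (projI t)^n
          ≤ dist u v * (m / Real.Gamma α)^n := by linarith
        _ = (m/Real.Gamma α)^n / n.factorial * dist u v * n.factorial := by
            field_simp
    linarith
  obtain ⟨N, hN⟩ : ∃ N : ℕ, (m / Real.Gamma α)^N / (N.factorial : ℝ) < 1 := by
    have h := FloorSemiring.tendsto_pow_div_factorial_atTop (K := ℝ) (m / Real.Gamma α)
    have h2 := h.eventually_lt_const (by norm_num : (0:ℝ) < 1)
    exact h2.exists
  set κ : NNReal := Real.toNNReal ((m/Real.Gamma α)^N / N.factorial) with hκ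
  have hκlt : κ < 1 := Real.toNNReal_lt_one.2 hN
  have hκcoe : (κ:ℝ) = (m/Real.Gamma α)^N / N.factorial := Real.coe_toNNReal _
    (div_nonneg (pow_nonneg (by positivity) N) (Nat.cast_nonneg _))
  have hcontr : ∀ lam : ℝ, ContractingWith κ ((Θ lam)^[N]) := by
    intro lam
    refine ⟨hκlt, LipschitzWith.of_dist_le_mul ?_⟩
    intro u v
    rw [hκcoe]
    exact key1' lam u v N
  set U : ℝ → (ℝ →ᵇ ℝ) := fun lam => ContractingWith.fixedPoint ((Θ lam)^[N]) (hcontr lam)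
    with hU
  have hUfix : ∀ lam, Θ lam (U lam) = U lam := fun lam =>
    ContractingWith.isFixedPt_fixedPoint_iterate (hcontr lam)
  -- dependence on lam
  have hΘdist : ∀ (lam lam' : ℝ) (x y : ℝ →ᵇ ℝ),
      dist (Θ lam x) (Θ lam' y) ≤ |lam - lam'| + (m/Real.Gamma α) * dist x y := by
    intro lam lam' x y
    have hc0 : (0:ℝ) ≤ |lam - lam'| + (m/Real.Gamma α) * dist x y := by
      have : (0:ℝ) ≤ (m/Real.Gamma α) * dist x y := mul_nonneg (by positivity) dist_nonneg
      linarith [abs_nonneg (lam - lam')]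
    rw [BoundedContinuousFunction.dist_le hc0]
    intro t
    rw [Real.dist_eq, hΘ, hΘ]
    have hpt := projI_mem t
    have heq : (lam * projI t + w (projI t) - J x (projI t))
        - (lam' * projI t + w (projI t) - J y (projI t))
        = (lam - lam') * projI t + (J y (projI t) - J x (projI t)) := by ring
    rw [heq]
    have h1 : |(lam - lam') * projI t| ≤ |lam - lam'| := by
      rw [abs_mul, abs_of_nonneg hpt.1]
      nlinarith [abs_nonneg (lam - lam'), hpt.2, hpt.1]
    have h2 : |J y (projI t) - J x (projI t)| ≤ (m/Real.Gamma α) * dist x y := by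
      rw [dist_comm x y]
      exact hJdiff y x (projI t) hpt
    calc |(lam - lam') * projI t + (J y (projI t) - J x (projI t))|
        ≤ |(lam - lam') * projI t| + |J y (projI t) - J x (projI t)| := abs_add_le _ _
      _ ≤ _ := by linarith
  have hiter : ∀ (lam lam' : ℝ) (k : ℕ) (z : ℝ →ᵇ ℝ),
      dist ((Θ lam)^[k] z) ((Θ lam')^[k] z)
        ≤ (k:ℝ) * (1 + m/Real.Gamma α)^k * |lam - lam'| := by
    intro lam lam' k
    induction k with
    | zero => intro z; simp
    | succ k ihk =>
      intro z
      rw [Function.iterate_succ_apply', Function.iterate_succ_apply']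
      have hmg : (0:ℝ) ≤ m/Real.Gamma α := by positivity
      have h1 : (1:ℝ) ≤ (1 + m/Real.Gamma α)^k := one_le_pow₀ (by linarith)
      have h2 : ((1:ℝ) + m/Real.Gamma α)^(k+1) = (1 + m/Real.Gamma α)^k * (1 + m/Real.Gamma α) :=
        pow_succ _ _
      have h3 := hΘdist lam lam' ((Θ lam)^[k] z) ((Θ lam')^[k] z)
      have h4 := ihk z
      have h5 : (0:ℝ) ≤ |lam - lam'| := abs_nonneg _
      have h6 : (m/Real.Gamma α) * dist ((Θ lam)^[k] z) ((Θ lam')^[k] z)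
          ≤ (m/Real.Gamma α) * ((k:ℝ) * (1 + m/Real.Gamma α)^k * |lam - lam'|) :=
        mul_le_mul_of_nonneg_left h4 hmg
    -- target: dist ≤ (k+1) * (1+m/Γ)^(k+1) * |lam-lam'|
      have h7 : (0:ℝ) ≤ (k:ℝ) := Nat.cast_nonneg k
      calc dist (Θ lam ((Θ lam)^[k] z)) (Θ lam' ((Θ lam')^[k] z))
          ≤ |lam - lam'| + (m/Real.Gamma α) * dist ((Θ lam)^[k] z) ((Θ lam')^[k] z) := h3
        _ ≤ |lam - lam'| + (m/Real.Gamma α) * ((k:ℝ) * (1 + m/Real.Gamma α)^k * |lam - lam'|) := by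
            linarith
        _ ≤ ((k:ℕ)+1 : ℝ) * (1 + m/Real.Gamma α)^(k+1) * |lam - lam'| := by
            rw [h2]
            have hP0 : (0:ℝ) ≤ (1 + m/Real.Gamma α)^k := by linarith
            have hPL : |lam - lam'| ≤ (1+m/Real.Gamma α)^k * |lam - lam'| :=
              le_mul_of_one_le_left h5 h1
            have hterm : (0:ℝ) ≤ (k:ℝ) * (1+m/Real.Gamma α)^k * |lam - lam'| :=
              mul_nonneg (mul_nonneg h7 hP0) h5
            have hterm2 : (0:ℝ) ≤ (1+m/Real.Gamma α)^k * (m/Real.Gamma α) * |lam - lam'| :=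
              mul_nonneg (mul_nonneg hP0 hmg) h5
            have hexp : ((k:ℝ)+1) * ((1 + m/Real.Gamma α)^k * (1 + m/Real.Gamma α)) * |lam - lam'|
                = (k:ℝ) * (1+m/Real.Gamma α)^k * |lam-lam'|
                  + (1+m/Real.Gamma α)^k * |lam-lam'|
                  + (m/Real.Gamma α) * ((k:ℝ) * (1+m/Real.Gamma α)^k * |lam-lam'|)
                  + (1+m/Real.Gamma α)^k * (m/Real.Gamma α) * |lam - lam'| := by ring
            push_cast
            linarith
        _ = ((k+1 : ℕ) : ℝ) * (1 + m/Real.Gamma α)^(k+1) * |lam - lam'| := by push_cast; ring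
  have hUdist : ∀ lam lam' : ℝ, dist (U lam) (U lam')
      ≤ ((N:ℝ) * (1 + m/Real.Gamma α)^N * |lam - lam'|) / (1 - κ) := by
    intro lam lam'
    exact ContractingWith.dist_fixedPoint_fixedPoint_of_dist_le' (hcontr lam) ((Θ lam')^[N])
      (ContractingWith.fixedPoint_isFixedPt (hcontr lam))
      (ContractingWith.fixedPoint_isFixedPt (hcontr lam'))
      (fun z => hiter lam lam' N z)
  -- psi
  set ψ : ℝ → ℝ := fun lam => ∫ s in Icc (0:ℝ) 1, q s * g s ((U lam) s) with hψ
  have hψ0 : ∀ lam, 0 ≤ ψ lam := fun lam =>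
    setIntegral_nonneg measurableSet_Icc (fun s hs => mul_nonneg (hq0 s hs) (hg0 _ _))
  set Qv : ℝ := ∫ s in Icc (0:ℝ) 1, q s with hQv
  have hQv0 : 0 ≤ Qv := setIntegral_nonneg measurableSet_Icc hq0
  have hψlip : ∀ lam lam' : ℝ, |ψ lam - ψ lam'| ≤ (m * Qv) * dist (U lam) (U lam') := by
    intro lam lam'
    have hsub : ψ lam - ψ lam'
        = ∫ s in Icc (0:ℝ) 1, q s * (g s (U lam s) - g s (U lam' s)) := by
      simp only [hψ]
      rw [← integral_sub (hqg (U lam)).integrable (hqg (U lam')).integrable]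
      congr 1; funext s; ring
    rw [hsub]
    have hintq : IntegrableOn (fun s => q s * (g s (U lam s) - g s (U lam' s)))
        (Icc (0:ℝ) 1) volume := by
      have h := (hqg (U lam)).integrable.sub (hqg (U lam')).integrable
      have he : (fun s => q s * (g s (U lam s) - g s (U lam' s)))
          = fun s => q s * g s (U lam s) - q s * g s (U lam' s) := by funext s; ring
      rw [IntegrableOn, he]
      exact h
    calc |∫ s in Icc (0:ℝ) 1, q s * (g s (U lam s) - g s (U lam' s))|
        ≤ ∫ s in Icc (0:ℝ) 1, |q s * (g s (U lam s) - g s (U lam' s))| := by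
          have := MeasureTheory.norm_integral_le_integral_norm
            (μ := volume.restrict (Icc (0:ℝ) 1))
            (f := fun s => q s * (g s (U lam s) - g s (U lam' s)))
          simp only [Real.norm_eq_abs] at this
          exact this
      _ ≤ ∫ s in Icc (0:ℝ) 1, q s * (m * dist (U lam) (U lam')) := by
          apply setIntegral_mono_on hintq.integrable.abs (hq.integrable.mul_const _)
            measurableSet_Icc
          intro s hs
          rw [abs_mul, abs_of_nonneg (hq0 s hs)]
          apply mul_le_mul_of_nonneg_left _ (hq0 s hs)
          have h3 := hglip s (U lam s) (U lam' s)
          have h4 : |U lam s - U lam' s| ≤ dist (U lam) (U lam') := by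
            have := BoundedContinuousFunction.dist_coe_le_dist (f := U lam) (g := U lam') s
            rwa [Real.dist_eq] at this
          nlinarith [abs_nonneg (U lam s - U lam' s)]
      _ = (m * Qv) * dist (U lam) (U lam') := by
          rw [MeasureTheory.integral_mul_const, ← hQv]
          ring
  have hψcont : Continuous ψ := by
    have hC : (0:ℝ) ≤ (m * Qv) * ((N:ℝ) * (1 + m/Real.Gamma α)^N) / (1 - κ) := by
      have h1 : (0:ℝ) < 1 - κ := (hcontr 0).one_sub_K_pos
      apply div_nonneg _ h1.le
      apply mul_nonneg (mul_nonneg hm hQv0)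
      apply mul_nonneg (Nat.cast_nonneg _) (pow_nonneg (by positivity) _)
    apply LipschitzWith.continuous
      (K := Real.toNNReal ((m * Qv) * ((N:ℝ) * (1 + m/Real.Gamma α)^N) / (1 - κ)))
    apply LipschitzWith.of_dist_le_mul
    intro x y
    rw [Real.dist_eq, Real.dist_eq]
    have h1 := hψlip x y
    have h2 := hUdist x y
    have h3 : (0:ℝ) ≤ m * Qv := mul_nonneg hm hQv0
    calc |ψ x - ψ y| ≤ (m * Qv) * dist (U x) (U y) := h1
      _ ≤ (m * Qv) * (((N:ℝ) * (1 + m/Real.Gamma α)^N * |x - y|) / (1 - κ)) :=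
          mul_le_mul_of_nonneg_left h2 h3
      _ = ((m * Qv) * ((N:ℝ) * (1 + m/Real.Gamma α)^N) / (1 - κ)) * |x - y| := by ring
      _ ≤ _ := mul_le_mul_of_nonneg_right (Real.le_coe_toNNReal _) (abs_nonneg _)
  -- growth bound on psi
  have hUle : ∀ (lam : ℝ) (t : ℝ), U lam t ≤ max lam 0 + 1 := by
    intro lam t
    conv_lhs => rw [← hUfix lam]
    rw [hΘ]
    have hpt := projI_mem t
    have h1 : lam * projI t ≤ max lam 0 := by
      rcases le_total lam 0 with h|h
      · have : lam * projI t ≤ 0 := mul_nonpos_of_nonpos_of_nonneg h hpt.1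
        rw [max_eq_right h]
        linarith
      · rw [max_eq_left h]
        nlinarith [hpt.1, hpt.2]
    have h2 := hJ0 (U lam) (projI t)
    have h3 := hw1 (projI t)
    linarith
  have hψub : ∀ lam : ℝ, ψ lam ≤ (aa * (max lam 0 + 1) + cc) * Qv := by
    intro lam
    have hmax0 : (0:ℝ) ≤ max lam 0 := le_max_right _ _
    simp only [hψ]
    calc (∫ s in Icc (0:ℝ) 1, q s * g s ((U lam) s))
        ≤ ∫ s in Icc (0:ℝ) 1, q s * (aa * (max lam 0 + 1) + cc) := by
          apply setIntegral_mono_on (hqg (U lam)) (hq.integrable.mul_const _) measurableSet_Icc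
          intro s hs
          apply mul_le_mul_of_nonneg_left _ (hq0 s hs)
          have h1 := hgrow s (U lam s)
          have h2 : max (U lam s) 0 ≤ max lam 0 + 1 :=
            max_le (hUle lam s) (by linarith)
          nlinarith
      _ = (aa * (max lam 0 + 1) + cc) * Qv := by
          rw [MeasureTheory.integral_mul_const, ← hQv]
          ring
  -- IVT
  set lam1 : ℝ := ((aa + cc) * Qv + 1)/(1 - aa*Qv) with hlam1
  have hA' : aa * Qv < 1 := hA
  have hden : 0 < 1 - aa*Qv := by linarith
  have hnum : 0 < (aa + cc) * Qv + 1 := by nlinarith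
  have hlam1pos : 0 < lam1 := div_pos hnum hden
  have hend : ψ lam1 - lam1 ≤ -1 := by
    have h1 := hψub lam1
    rw [max_eq_left hlam1pos.le] at h1
    have h4 : lam1 * (1 - aa*Qv) = (aa+cc)*Qv + 1 := by
      rw [hlam1]; field_simp
    have h5 : (aa*(lam1+1)+cc)*Qv = lam1 - 1 := by linear_combination -h4
    linarith
  have hstart : 0 ≤ ψ 0 - 0 := by simpa using hψ0 0
  obtain ⟨lamS, hmemS, hrootS⟩ : ∃ l ∈ Icc (0:ℝ) lam1, ψ l - l = 0 := by
    have hc : ContinuousOn (fun l => ψ l - l) (Icc (0:ℝ) lam1) :=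
      (hψcont.sub continuous_id).continuousOn
    have himg := intermediate_value_Icc' hlam1pos.le hc
    have h0mem : (0:ℝ) ∈ Icc (ψ lam1 - lam1) (ψ 0 - 0) := ⟨by linarith, by linarith⟩
    obtain ⟨l, hl, he⟩ := himg h0mem
    exact ⟨l, hl, he⟩
  refine ⟨U lamS, lamS, hmemS.1, ?_, ?_⟩
  · intro t
    conv_lhs => rw [← hUfix lamS]
    rw [hΘ]
  · have hψS : ψ lamS = lamS := by linarith [hrootS]
    conv_lhs => rw [← hψS]

end Volterra
/-! ### per-m approximate solutions -/

section Main
variable {α η μ₀ β : ℝ} {ν : MeasureTheory.SignedMeasure ℝ}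

lemma Hker_contOn_s (hα : 2 < α) (t : ℝ) :
    ContinuousOn (fun s => Hker α η μ₀ β ν t s) (Icc (0:ℝ) 1) := by
  have he : (fun s => Hker α η μ₀ β ν t s)
      = fun s => t * qq α η μ₀ β ν s - Kk α t s := by
    funext s; rw [Hker_eq hα]
  rw [he]
  exact (continuousOn_const.mul (qq_contOn ν hα)).sub
    ((Kk_continuous hα).comp (continuous_const.prodMk continuous_id)).continuousOn

lemma Hker_int (hα : 2 < α) (t : ℝ) {h : ℝ → ℝ}
    (hmeas : AEStronglyMeasurable h (volume.restrict (Icc (0:ℝ) 1)))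
    {C : ℝ} (hC : ∀ s, |h s| ≤ C) :
    IntegrableOn (fun s => Hker α η μ₀ β ν t s * h s) (Icc (0:ℝ) 1) volume := by
  have h1 := ((Hker_contOn_s (η := η) (μ₀ := μ₀) (β := β) (ν := ν) hα
      t).integrableOn_compact isCompact_Icc).integrable.bdd_mul
    hmeas (ae_of_all _ fun s => by rw [Real.norm_eq_abs]; exact hC s)
  have he : (fun s => Hker α η μ₀ β ν t s * h s)
      = fun s => h s * Hker α η μ₀ β ν t s := by funext s; ring
  rw [IntegrableOn, he]
  exact h1

lemma Hker_integral_close (hα : 2 < α) (hη : η ∈ Ioo (0:ℝ) 1) (hμ : 0 ≤ μ₀) (hβ : 0 ≤ β)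
    (hΛ₁ : Lam η μ₀ β ν < 1) (hgA : ∀ s ∈ Icc (0:ℝ) 1, 0 ≤ gA α ν s)
    {t : ℝ} (ht : t ∈ Icc (0:ℝ) 1) {h1 h2 : ℝ → ℝ} {e : ℝ}
    (hi1 : IntegrableOn (fun s => Hker α η μ₀ β ν t s * h1 s) (Icc (0:ℝ) 1) volume)
    (hi2 : IntegrableOn (fun s => Hker α η μ₀ β ν t s * h2 s) (Icc (0:ℝ) 1) volume)
    (hdiff : ∀ s ∈ Icc (0:ℝ) 1, |h1 s - h2 s| ≤ e) :
    |(∫ s in Icc (0:ℝ) 1, Hker α η μ₀ β ν t s * h1 s)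
      - ∫ s in Icc (0:ℝ) 1, Hker α η μ₀ β ν t s * h2 s| ≤ tau2 α η μ₀ β ν * e := by
  have hsub : (∫ s in Icc (0:ℝ) 1, Hker α η μ₀ β ν t s * h1 s)
      - ∫ s in Icc (0:ℝ) 1, Hker α η μ₀ β ν t s * h2 s
      = ∫ s in Icc (0:ℝ) 1, Hker α η μ₀ β ν t s * (h1 s - h2 s) := by
    rw [← integral_sub hi1.integrable hi2.integrable]
    congr 1; funext s; ring
  rw [hsub]
  have hintd : IntegrableOn (fun s => Hker α η μ₀ β ν t s * (h1 s - h2 s))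
      (Icc (0:ℝ) 1) volume := by
    have h := hi1.integrable.sub hi2.integrable
    have he : (fun s => Hker α η μ₀ β ν t s * (h1 s - h2 s))
        = fun s => Hker α η μ₀ β ν t s * h1 s - Hker α η μ₀ β ν t s * h2 s := by
      funext s; ring
    rw [IntegrableOn, he]
    exact h
  calc |∫ s in Icc (0:ℝ) 1, Hker α η μ₀ β ν t s * (h1 s - h2 s)|
      ≤ ∫ s in Icc (0:ℝ) 1, |Hker α η μ₀ β ν t s * (h1 s - h2 s)| := by
        have := MeasureTheory.norm_integral_le_integral_norm
          (μ := volume.restrict (Icc (0:ℝ) 1))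
          (f := fun s => Hker α η μ₀ β ν t s * (h1 s - h2 s))
        simp only [Real.norm_eq_abs] at this
        exact this
    _ ≤ ∫ s in Icc (0:ℝ) 1, Phi α η μ₀ β ν s * e := by
        apply setIntegral_mono_on hintd.integrable.abs
          ((Phi_int hα).integrable.mul_const _) measurableSet_Icc
        intro s hs
        rw [abs_mul, abs_of_nonneg (Hker_nonneg hα hη hμ hβ hΛ₁ hgA ht hs)]
        apply mul_le_mul (Hker_le_Phi hα hη hμ hβ hΛ₁ hgA ht hs) (hdiff s hs) (abs_nonneg _)
          (Phi_nonneg hα hη hμ hβ hΛ₁ hgA hs)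
    _ = tau2 α η μ₀ β ν * e := by
        rw [MeasureTheory.integral_mul_const]
        rfl

set_option maxHeartbeats 1000000 in
lemma exists_un (hα : 2 < α) (hη : η ∈ Ioo (0:ℝ) 1) (hμ : 0 ≤ μ₀) (hβ : 0 ≤ β)
    (hΛ₁ : Lam η μ₀ β ν < 1)
    (hgA : ∀ s ∈ Icc (0:ℝ) 1, 0 ≤ gA α ν s)
    (f : ℝ → ℝ → ℝ)
    (hf : ContinuousOn (fun p : ℝ × ℝ => f p.1 p.2) (Icc (0:ℝ) 1 ×ˢ Ici (0:ℝ)))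
    (hfpos : ∀ t ∈ Icc (0:ℝ) 1, ∀ x : ℝ, 0 ≤ x → 0 ≤ f t x)
    (a c : ℝ) (ha : 0 < a) (hat : a * tau2 α η μ₀ β ν < 1) (hc : 0 < c)
    (hC1 : ∀ t ∈ Icc (0:ℝ) 1, ∀ x : ℝ, 0 ≤ x → f t x ≤ a * x + c)
    (b δ : ℝ) (hb : 1 ≤ b * tau1 α η μ₀ β ν) (hδ : 0 < δ)
    (hC2 : ∀ t ∈ Icc (0:ℝ) 1, ∀ x : ℝ, 0 ≤ x → x ≤ δ → b * x ≤ f t x)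
    (X R : ℝ) (hR : R = (c * tau2 α η μ₀ β ν + 1)/(1 - a * tau2 α η μ₀ β ν))
    (hX : X = R + δ + 1)
    (m : ℕ) (hm1 : 1 ≤ (m:ℝ)) (hmb : b ≤ (m:ℝ)) :
    ∃ u : ℝ → ℝ, Continuous u ∧
      (∀ t ∈ Icc (0:ℝ) 1, u t
        = (∫ s in Icc (0:ℝ) 1, Hker α η μ₀ β ν t s * gm f X m s (u s))
          + rho α η t / m) ∧
      (∀ t, 0 ≤ u t) ∧ (∀ t ∈ Icc (0:ℝ) 1, u t ≤ R) ∧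
      (∃ t₀ ∈ Icc (0:ℝ) 1, δ/2 < u t₀) ∧
      (∀ t t' : ℝ, |u t - u t'|
        ≤ ((a*R+c) * tau2 α η μ₀ β ν + α + (a*X+c)*(α-1)/Real.Gamma α + 1) * |t - t'|) := by
  classical
  have hΓ : 0 < Real.Gamma α := Gamma_pos hα
  have hτ2 : 0 ≤ tau2 α η μ₀ β ν := tau2_nonneg hα hη hμ hβ hΛ₁ hgA
  have hτ1 : 0 < tau1 α η μ₀ β ν := tau1_pos hα hη hμ hβ hΛ₁ hgA
  have hb0 : 0 < b := b_pos_of hb hτ1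
  have hden : 0 < 1 - a * tau2 α η μ₀ β ν := by linarith
  have hR0 : 0 < R := by rw [hR]; apply div_pos (by nlinarith) hden
  have hδX : δ ≤ X := by rw [hX]; linarith
  have hX0 : 0 ≤ X := by rw [hX]; linarith
  have hRX : R ≤ X := by rw [hX]; linarith
  have hm0 : (0:ℝ) < m := by linarith
  set Mg := a * X + c with hMg
  have hMg0 : 0 ≤ Mg := by rw [hMg]; nlinarith
  set g := gm f X m with hg
  have hg0 : ∀ s x, 0 ≤ g s x := fun s x => gm_nonneg hfpos m s x
  have hgb : ∀ s x, g s x ≤ Mg := fun s x =>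
    le_trans (gm_le_FF hf hfpos hX0 m s x) (FF_le' ha hX0 hC1 s x)
  have hgrow : ∀ s x, g s x ≤ a * max x 0 + c := fun s x =>
    le_trans (gm_le_FF hf hfpos hX0 m s x) (FF_le ha hC1 s x)
  have hglip' : ∀ s x x', |g s x - g s x'| ≤ (m:ℝ) * |x - x'| := fun s x x' =>
    gm_lip hfpos m s x x'
  have hgmeas : ∀ u : ℝ → ℝ, Continuous u → Measurable fun s => g s (u s) :=
    fun u hu => gm_meas hf m hu
  have hAq : a * (∫ s in Icc (0:ℝ) 1, qq α η μ₀ β ν s) < 1 :=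
    lt_of_le_of_lt (mul_le_mul_of_nonneg_left (int_qq_le_tau2 hα hη hμ hΛ₁) ha.le) hat
  obtain ⟨u, lam, hlam0, hequ, hlameq⟩ := volterra_shoot α hα (qq α η μ₀ β ν)
    (fun t => rho α η (projI t) / m) g (m:ℝ) Mg a c
    (qq_int hα) (fun s hs => qq_nonneg hα hη hμ hβ hΛ₁ hgA hs)
    (((rho_continuous hα).comp projI_continuous).div_const _)
    (fun t => div_nonneg (rho_mem hα hη (projI_mem t)).1 hm0.le)
    (fun t => by
      have h1 := (rho_mem hα hη (projI_mem t)).2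
      rw [div_le_one hm0]
      linarith)
    (by positivity) hMg0 hgmeas hg0 hgb hglip' hgrow ha hc hAq
  -- basic integrability facts for this u
  have hum : AEStronglyMeasurable (fun s => g s (u s)) (volume.restrict (Icc (0:ℝ) 1)) :=
    (hgmeas u u.continuous).aestronglyMeasurable
  have hgabs : ∀ s, ‖g s (u s)‖ ≤ Mg := fun s => by
    rw [Real.norm_eq_abs, abs_of_nonneg (hg0 _ _)]; exact hgb _ _
  have hqg : IntegrableOn (fun s => qq α η μ₀ β ν s * g s (u s)) (Icc (0:ℝ) 1) volume := by
    have h := (qq_int (η := η) (μ₀ := μ₀) (β := β) (ν := ν) hα).integrable.bdd_mul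
      hum (ae_of_all _ hgabs)
    have he : (fun s => qq α η μ₀ β ν s * g s (u s))
        = fun s => g s (u s) * qq α η μ₀ β ν s := by funext s; ring
    rw [IntegrableOn, he]
    exact h
  have hKg : ∀ τ : ℝ, IntegrableOn (fun s => Kk α τ s * g s (u s)) (Icc (0:ℝ) 1) volume := by
    intro τ
    have hKi : IntegrableOn (fun s => Kk α τ s) (Icc (0:ℝ) 1) volume :=
      ((Kk_continuous hα).comp
        (continuous_const.prodMk continuous_id)).continuousOn.integrableOn_compact isCompact_Icc
    have h := hKi.integrable.bdd_mul hum (ae_of_all _ hgabs)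
    have he : (fun s => Kk α τ s * g s (u s)) = fun s => g s (u s) * Kk α τ s := by
      funext s; ring
    rw [IntegrableOn, he]
    exact h
  have hHg : ∀ t : ℝ, IntegrableOn (fun s => Hker α η μ₀ β ν t s * g s (u s))
      (Icc (0:ℝ) 1) volume := fun t =>
    Hker_int hα t hum (fun s => by rw [← Real.norm_eq_abs]; exact hgabs s)
  -- the fixed point identity
  have hfix : ∀ t ∈ Icc (0:ℝ) 1, u t
      = (∫ s in Icc (0:ℝ) 1, Hker α η μ₀ β ν t s * g s (u s)) + rho α η t / m := by
    intro t ht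
    have h1 := hequ t
    simp only [projI_eq_self ht] at h1
    have h2 : (∫ s in Icc (0:ℝ) 1, Hker α η μ₀ β ν t s * g s (u s))
        = lam * t - ∫ s in Icc (0:ℝ) 1, Kk α t s * g s (u s) := by
      have hptw : (fun s => Hker α η μ₀ β ν t s * g s (u s))
          = fun s => t * (qq α η μ₀ β ν s * g s (u s)) - Kk α t s * g s (u s) := by
        funext s; rw [Hker_eq hα]; ring
      rw [hptw, integral_sub (hqg.integrable.const_mul t) (hKg t).integrable,
        MeasureTheory.integral_const_mul, ← hlameq]
      ring
    rw [h2]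
    linarith
  -- projection invariance and nonnegativity
  have hproj : ∀ t : ℝ, u t = u (projI t) := by
    intro t
    have h1 := hequ t
    have h2 := hequ (projI t)
    simp only [projI_eq_self (projI_mem t)] at h1 h2
    rw [h1, h2]
  have hposIcc : ∀ t ∈ Icc (0:ℝ) 1, 0 ≤ u t := by
    intro t ht
    rw [hfix t ht]
    have h1 : 0 ≤ ∫ s in Icc (0:ℝ) 1, Hker α η μ₀ β ν t s * g s (u s) :=
      setIntegral_nonneg measurableSet_Icc
        (fun s hs => mul_nonneg (Hker_nonneg hα hη hμ hβ hΛ₁ hgA ht hs) (hg0 _ _))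
    have h2 : 0 ≤ rho α η t / m := div_nonneg (rho_mem hα hη ht).1 hm0.le
    linarith
  have hpos : ∀ t, 0 ≤ u t := fun t => by
    rw [hproj t]; exact hposIcc _ (projI_mem t)
  -- upper bound
  have hub : ∀ t ∈ Icc (0:ℝ) 1, u t ≤ R := by
    obtain ⟨tm, htm, hmax⟩ := isCompact_Icc.exists_isMaxOn
      (nonempty_Icc.2 (by norm_num : (0:ℝ) ≤ 1)) (u.continuous.continuousOn)
    have hmax' : ∀ t ∈ Icc (0:ℝ) 1, u t ≤ u tm := fun t ht => isMaxOn_iff.1 hmax t ht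
    have hS0 : 0 ≤ u tm := hposIcc tm htm
    have key : u tm ≤ (a*(u tm) + c) * tau2 α η μ₀ β ν + 1 := by
      have h1 := hfix tm htm
      have h2 : (∫ s in Icc (0:ℝ) 1, Hker α η μ₀ β ν tm s * g s (u s))
          ≤ ∫ s in Icc (0:ℝ) 1, Phi α η μ₀ β ν s * (a*(u tm) + c) := by
        apply setIntegral_mono_on (hHg tm) ((Phi_int hα).integrable.mul_const _)
          measurableSet_Icc
        intro s hs
        have hgs : g s (u s) ≤ a*(u tm) + c := by
          have hu1 := hgrow s (u s)
          have hu2 : max (u s) 0 = u s := max_eq_left (hposIcc s hs)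
          rw [hu2] at hu1
          have hu3 := hmax' s hs
          nlinarith
        exact mul_le_mul (Hker_le_Phi hα hη hμ hβ hΛ₁ hgA htm hs) hgs (hg0 _ _)
          (Phi_nonneg hα hη hμ hβ hΛ₁ hgA hs)
      have h3 : (∫ s in Icc (0:ℝ) 1, Phi α η μ₀ β ν s * (a*(u tm) + c))
          = tau2 α η μ₀ β ν * (a*(u tm) + c) := by
        rw [MeasureTheory.integral_mul_const]
        rfl
      have h4 : rho α η tm / m ≤ 1 := by
        rw [div_le_one hm0]
        linarith [(rho_mem hα hη htm).2]
      rw [h1]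
      rw [h3] at h2
      nlinarith
    have hSR : u tm ≤ R := by
      have hReq : R * (1 - a * tau2 α η μ₀ β ν) = c * tau2 α η μ₀ β ν + 1 := by
        rw [hR]; field_simp; exact div_self (by rw [mul_comm]; exact hden.ne')
      nlinarith
    intro t ht
    exact le_trans (hmax' t ht) hSR
  -- lower bound via tau1
  have hlb : ∃ t₀ ∈ Icc (0:ℝ) 1, δ/2 < u t₀ := by
    by_contra hcon
    push_neg at hcon
    have hsm : ∀ t ∈ Icc (0:ℝ) 1, u t ≤ δ/2 := hcon
    have hPhiu : IntegrableOn (fun s => Phi α η μ₀ β ν s * u s) (Icc (0:ℝ) 1) volume := by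
      have h := (Phi_int (η := η) (μ₀ := μ₀) (β := β) (ν := ν) hα).integrable.bdd_mul
        (u.continuous.measurable.aestronglyMeasurable) (ae_of_all _ fun s => u.norm_coe_le_norm s)
      have he : (fun s => Phi α η μ₀ β ν s * u s) = fun s => u s * Phi α η μ₀ β ν s := by
        funext s; ring
      rw [IntegrableOn, he]
      exact h
    set M := ∫ s in Icc (0:ℝ) 1, Phi α η μ₀ β ν s * u s with hM
    have hM0 : 0 ≤ M := setIntegral_nonneg measurableSet_Icc
      (fun s hs => mul_nonneg (Phi_nonneg hα hη hμ hβ hΛ₁ hgA hs) (hposIcc s hs))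
    have step1 : ∀ t ∈ Icc (0:ℝ) 1, rho α η t * (b * M + 1/m) ≤ u t := by
      intro t ht
      rw [hfix t ht]
      have h2 : (∫ s in Icc (0:ℝ) 1, (rho α η t * b) * (Phi α η μ₀ β ν s * u s))
          ≤ ∫ s in Icc (0:ℝ) 1, Hker α η μ₀ β ν t s * g s (u s) := by
        apply setIntegral_mono_on (hPhiu.integrable.const_mul _) (hHg t) measurableSet_Icc
        intro s hs
        have hA1 : rho α η t * Phi α η μ₀ β ν s ≤ Hker α η μ₀ β ν t s :=
          Hker_ge hα hη hμ hβ hΛ₁ hgA ht hs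
        have hA2 : b * u s ≤ g s (u s) :=
          gm_lb hb0 hδ hδX hfpos hC2 hmb s (hposIcc s hs) (hsm s hs)
        have hA3 : 0 ≤ b * u s := mul_nonneg hb0.le (hposIcc s hs)
        have hA4 : 0 ≤ Hker α η μ₀ β ν t s := Hker_nonneg hα hη hμ hβ hΛ₁ hgA ht hs
        calc (rho α η t * b) * (Phi α η μ₀ β ν s * u s)
            = (rho α η t * Phi α η μ₀ β ν s) * (b * u s) := by ring
          _ ≤ Hker α η μ₀ β ν t s * g s (u s) := mul_le_mul hA1 hA2 hA3 hA4
      have h3 : (∫ s in Icc (0:ℝ) 1, (rho α η t * b) * (Phi α η μ₀ β ν s * u s))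
          = rho α η t * b * M := by
        rw [MeasureTheory.integral_const_mul]
      have h4 : 0 ≤ rho α η t := (rho_mem hα hη ht).1
      rw [h3] at h2
      have h5 : rho α η t * (b * M + 1/m) = rho α η t * b * M + rho α η t * (1/m) := by ring
      have h6 : rho α η t * (1/m) ≤ rho α η t / m := by
        rw [mul_one_div]
      linarith
    have step2 : (b * M + 1/m) * tau1 α η μ₀ β ν ≤ M := by
      have h1 : (∫ t in Icc (0:ℝ) 1, ((b * M + 1/m)) * (rho α η t * Phi α η μ₀ β ν t))
          ≤ ∫ t in Icc (0:ℝ) 1, Phi α η μ₀ β ν t * u t := by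
        apply setIntegral_mono_on ((rhoPhi_int hα).integrable.const_mul _) hPhiu.integrable
          measurableSet_Icc
        intro t ht
        have h2 := step1 t ht
        have h3 : 0 ≤ Phi α η μ₀ β ν t := Phi_nonneg hα hη hμ hβ hΛ₁ hgA ht
        calc (b * M + 1/m) * (rho α η t * Phi α η μ₀ β ν t)
            = Phi α η μ₀ β ν t * (rho α η t * (b * M + 1/m)) := by ring
          _ ≤ Phi α η μ₀ β ν t * u t := mul_le_mul_of_nonneg_left h2 h3
      have h4 : (∫ t in Icc (0:ℝ) 1, ((b * M + 1/m)) * (rho α η t * Phi α η μ₀ β ν t))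
          = (b * M + 1/m) * tau1 α η μ₀ β ν := by
        rw [MeasureTheory.integral_const_mul]
        rfl
      rw [h4] at h1
      exact h1
    have h1m : 0 < 1/(m:ℝ) := by positivity
    nlinarith [step2, hM0, hτ1, hb, h1m, mul_pos hτ1 h1m]
  -- Lipschitz bound
  have hlamB : lam ≤ (a*R + c) * tau2 α η μ₀ β ν := by
    rw [hlameq]
    calc (∫ s in Icc (0:ℝ) 1, qq α η μ₀ β ν s * g s (u s))
        ≤ ∫ s in Icc (0:ℝ) 1, Phi α η μ₀ β ν s * (a*R + c) := by
          apply setIntegral_mono_on hqg ((Phi_int hα).integrable.mul_const _) measurableSet_Icc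
          intro s hs
          have hgs : g s (u s) ≤ a*R + c := by
            have hu1 := hgrow s (u s)
            have hu2 : max (u s) 0 = u s := max_eq_left (hposIcc s hs)
            rw [hu2] at hu1
            have hu3 := hub s hs
            nlinarith
          exact mul_le_mul (qq_le_Phi hα hη hμ hΛ₁ hs) hgs (hg0 _ _)
            (Phi_nonneg hα hη hμ hβ hΛ₁ hgA hs)
      _ = (a*R + c) * tau2 α η μ₀ β ν := by
          rw [MeasureTheory.integral_mul_const]
          have : (∫ s in Icc (0:ℝ) 1, Phi α η μ₀ β ν s) = tau2 α η μ₀ β ν := rfl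
          rw [this, mul_comm]
  have hvol : volume (Icc (0:ℝ) 1) = 1 := by rw [Real.volume_Icc]; norm_num
  have hvol' : (volume (Icc (0:ℝ) 1)).toReal = 1 := by rw [hvol]; simp
  have hvollt : volume (Icc (0:ℝ) 1) < ⊤ := by rw [hvol]; exact ENNReal.one_lt_top
  have hKdiff : ∀ τ τ' : ℝ, τ ∈ Icc (0:ℝ) 1 → τ' ∈ Icc (0:ℝ) 1 →
      |(∫ s in Icc (0:ℝ) 1, Kk α τ s * g s (u s))
        - ∫ s in Icc (0:ℝ) 1, Kk α τ' s * g s (u s)|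
      ≤ (Mg * (α-1) / Real.Gamma α) * |τ - τ'| := by
    intro τ τ' hτ hτ'
    have hsub : (∫ s in Icc (0:ℝ) 1, Kk α τ s * g s (u s))
        - ∫ s in Icc (0:ℝ) 1, Kk α τ' s * g s (u s)
        = ∫ s in Icc (0:ℝ) 1, (Kk α τ s - Kk α τ' s) * g s (u s) := by
      rw [← integral_sub (hKg τ).integrable (hKg τ').integrable]
      congr 1; funext s; ring
    rw [hsub]
    have hmeas2 : AEStronglyMeasurable (fun s => (Kk α τ s - Kk α τ' s) * g s (u s))
        (volume.restrict (Icc (0:ℝ) 1)) := by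
      apply AEStronglyMeasurable.mul _ hum
      exact (((Kk_continuous hα).comp (continuous_const.prodMk continuous_id)).sub
        ((Kk_continuous hα).comp (continuous_const.prodMk continuous_id))).aestronglyMeasurable
    have hbd := norm_setIntegral_le_of_norm_le_const (f := fun s => (Kk α τ s - Kk α τ' s) * g s (u s))
      (C := (Mg * (α-1) / Real.Gamma α) * |τ - τ'|) hvollt ?_
    · rw [Real.norm_eq_abs, measureReal_def, hvol', mul_one] at hbd
      exact hbd
    · intro s hs
      rw [Real.norm_eq_abs, abs_mul]
      have h1 := Kk_lip_t hα hτ hτ' hs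
      have h2 : |g s (u s)| ≤ Mg := by rw [← Real.norm_eq_abs]; exact hgabs s
      calc |Kk α τ s - Kk α τ' s| * |g s (u s)|
          ≤ (((α-1)/Real.Gamma α) * |τ - τ'|) * Mg := by
            apply mul_le_mul h1 h2 (abs_nonneg _)
            exact mul_nonneg (div_nonneg (by linarith) hΓ.le) (abs_nonneg _)
        _ = (Mg * (α-1) / Real.Gamma α) * |τ - τ'| := by ring
  have hlip : ∀ t t' : ℝ, |u t - u t'|
      ≤ ((a*R+c) * tau2 α η μ₀ β ν + α + (a*X+c)*(α-1)/Real.Gamma α + 1) * |t - t'| := by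
    intro t t'
    have h1 := hequ t
    have h2 := hequ t'
    have hpt := projI_mem t
    have hpt' := projI_mem t'
    have hplip := projI_lip t t'
    have heq : u t - u t' = lam * (projI t - projI t')
        + (rho α η (projI t) - rho α η (projI t'))/m
        - ((∫ s in Icc (0:ℝ) 1, Kk α (projI t) s * g s (u s))
            - ∫ s in Icc (0:ℝ) 1, Kk α (projI t') s * g s (u s)) := by
      rw [h1, h2]
      have hid1 : projI (projI t) = projI t := projI_eq_self (projI_mem t)
      have hid2 : projI (projI t') = projI t' := projI_eq_self (projI_mem t')
      rw [hid1, hid2]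
      ring
    rw [heq]
    have e1 : |lam * (projI t - projI t')| ≤ ((a*R+c) * tau2 α η μ₀ β ν) * |t - t'| := by
      rw [abs_mul, abs_of_nonneg hlam0]
      have hB0 : 0 ≤ (a*R+c) * tau2 α η μ₀ β ν := by nlinarith
      apply mul_le_mul hlamB hplip (abs_nonneg _) hB0
    have e2 : |(rho α η (projI t) - rho α η (projI t'))/m| ≤ α * |t - t'| := by
      rw [abs_div, abs_of_pos hm0]
      have h3 := rho_lipschitz hα hη hpt hpt'
      rw [div_le_iff₀ hm0]
      have h4 : α * |projI t - projI t'| ≤ α * |t - t'| :=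
        mul_le_mul_of_nonneg_left hplip (by linarith)
      have h5 : α * |t - t'| ≤ α * |t - t'| * m := by
        nlinarith [abs_nonneg (t - t'), mul_nonneg (show (0:ℝ) ≤ α by linarith)
          (abs_nonneg (t - t'))]
      linarith
    have e3 : |(∫ s in Icc (0:ℝ) 1, Kk α (projI t) s * g s (u s))
        - ∫ s in Icc (0:ℝ) 1, Kk α (projI t') s * g s (u s)|
        ≤ ((a*X+c)*(α-1)/Real.Gamma α) * |t - t'| := by
      have h3 := hKdiff (projI t) (projI t') hpt hpt'
      have hB0 : 0 ≤ Mg * (α-1) / Real.Gamma α :=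
        div_nonneg (mul_nonneg hMg0 (by linarith)) hΓ.le
      calc |(∫ s in Icc (0:ℝ) 1, Kk α (projI t) s * g s (u s))
          - ∫ s in Icc (0:ℝ) 1, Kk α (projI t') s * g s (u s)|
          ≤ (Mg * (α-1) / Real.Gamma α) * |projI t - projI t'| := h3
        _ ≤ (Mg * (α-1) / Real.Gamma α) * |t - t'| := mul_le_mul_of_nonneg_left hplip hB0
        _ = ((a*X+c)*(α-1)/Real.Gamma α) * |t - t'| := by rw [hMg]
    calc |lam * (projI t - projI t')
        + (rho α η (projI t) - rho α η (projI t'))/m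
        - ((∫ s in Icc (0:ℝ) 1, Kk α (projI t) s * g s (u s))
            - ∫ s in Icc (0:ℝ) 1, Kk α (projI t') s * g s (u s))|
        ≤ |lam * (projI t - projI t') + (rho α η (projI t) - rho α η (projI t'))/m|
          + |(∫ s in Icc (0:ℝ) 1, Kk α (projI t) s * g s (u s))
            - ∫ s in Icc (0:ℝ) 1, Kk α (projI t') s * g s (u s)| := abs_sub _ _
      _ ≤ |lam * (projI t - projI t')| + |(rho α η (projI t) - rho α η (projI t'))/m|
          + |(∫ s in Icc (0:ℝ) 1, Kk α (projI t) s * g s (u s))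
            - ∫ s in Icc (0:ℝ) 1, Kk α (projI t') s * g s (u s)| := by
          have := abs_add_le (lam * (projI t - projI t'))
            ((rho α η (projI t) - rho α η (projI t'))/m)
          linarith
      _ ≤ ((a*R+c) * tau2 α η μ₀ β ν + α + (a*X+c)*(α-1)/Real.Gamma α + 1) * |t - t'| := by
          have h6 : (0:ℝ) ≤ |t - t'| := abs_nonneg _
          nlinarith [e1, e2, e3]
  exact ⟨u, u.continuous, hfix, hpos, hub, hlb, hlip⟩

end Main

end BVPaux

set_option maxHeartbeats 2000000 in
/-- Theorem 3.1: under (H1), (H2), (C1) and (C2) the nonlocal fractional boundary value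
problem has at least one positive solution, i.e. a nonnegative, not identically zero,
continuous fixed point of `u ↦ ∫₀¹ H(·,s)f(s,u(s)) ds`. -/
theorem exists_positive_solution (α η μ₀ β : ℝ) (ν : MeasureTheory.SignedMeasure ℝ)
    (hα₁ : 2 < α) (hα₂ : α ≤ 3) (hη : η ∈ Ioo (0:ℝ) 1) (hμ : 0 ≤ μ₀) (hβ : 0 ≤ β)
    (hΛ₀ : 0 ≤ Lam η μ₀ β ν) (hΛ₁ : Lam η μ₀ β ν < 1)
    (hgA : ∀ s ∈ Icc (0:ℝ) 1, 0 ≤ gA α ν s)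
    (f : ℝ → ℝ → ℝ)
    (hf : ContinuousOn (fun p : ℝ × ℝ => f p.1 p.2) (Icc (0:ℝ) 1 ×ˢ Ici (0:ℝ)))
    (hfpos : ∀ t ∈ Icc (0:ℝ) 1, ∀ x : ℝ, 0 ≤ x → 0 ≤ f t x)
    -- (C1)
    (a c : ℝ) (ha : 0 < a) (hat : a * tau2 α η μ₀ β ν < 1) (hc : 0 < c)
    (hC1 : ∀ t ∈ Icc (0:ℝ) 1, ∀ x : ℝ, 0 ≤ x → f t x ≤ a * x + c)
    -- (C2)
    (b δ : ℝ) (hb : 1 ≤ b * tau1 α η μ₀ β ν) (hδ : 0 < δ)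
    (hC2 : ∀ t ∈ Icc (0:ℝ) 1, ∀ x : ℝ, 0 ≤ x → x ≤ δ → b * x ≤ f t x) :
    ∃ u : ℝ → ℝ, ContinuousOn u (Icc (0:ℝ) 1) ∧
      (∀ t ∈ Icc (0:ℝ) 1, 0 ≤ u t) ∧
      (∃ t ∈ Icc (0:ℝ) 1, u t ≠ 0) ∧
      ∀ t ∈ Icc (0:ℝ) 1,
        u t = ∫ s in Icc (0:ℝ) 1, Hker α η μ₀ β ν t s * f s (u s) := by
  classical
  have hα := hα₁
  have hΓ : 0 < Real.Gamma α := BVPaux.Gamma_pos hα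
  have hτ2 : 0 ≤ tau2 α η μ₀ β ν := BVPaux.tau2_nonneg hα hη hμ hβ hΛ₁ hgA
  have hden : 0 < 1 - a * tau2 α η μ₀ β ν := by linarith
  set R : ℝ := (c * tau2 α η μ₀ β ν + 1)/(1 - a * tau2 α η μ₀ β ν) with hR
  set X : ℝ := R + δ + 1 with hX
  have hR0 : 0 < R := by rw [hR]; exact div_pos (by nlinarith) hden
  have hX0 : 0 ≤ X := by rw [hX]; linarith
  have hRX : R ≤ X := by rw [hX]; linarith
  set mf : ℕ → ℕ := fun n => ⌈b⌉₊ + 1 + n with hmf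
  have hmfself : ∀ n : ℕ, n ≤ mf n := fun n => by simp only [hmf]; omega
  have hmf1 : ∀ n : ℕ, 1 ≤ ((mf n : ℕ) : ℝ) := by
    intro n
    have h : 1 ≤ mf n := by simp only [hmf]; omega
    exact_mod_cast h
  have hmfb : ∀ n : ℕ, b ≤ ((mf n : ℕ) : ℝ) := by
    intro n
    have h1 : b ≤ (⌈b⌉₊ : ℝ) := Nat.le_ceil b
    have h2 : ((⌈b⌉₊ : ℕ) : ℝ) ≤ ((mf n : ℕ) : ℝ) := by
      have h : ⌈b⌉₊ ≤ mf n := by simp only [hmf]; omega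
      exact_mod_cast h
    linarith
  have hex : ∀ n : ℕ, ∃ u : ℝ → ℝ, Continuous u ∧
      (∀ t ∈ Icc (0:ℝ) 1, u t
        = (∫ s in Icc (0:ℝ) 1, Hker α η μ₀ β ν t s * BVPaux.gm f X (mf n) s (u s))
          + rho α η t / (mf n)) ∧
      (∀ t, 0 ≤ u t) ∧ (∀ t ∈ Icc (0:ℝ) 1, u t ≤ R) ∧
      (∃ t₀ ∈ Icc (0:ℝ) 1, δ/2 < u t₀) ∧
      (∀ t t' : ℝ, |u t - u t'|
        ≤ ((a*R+c) * tau2 α η μ₀ β ν + α + (a*X+c)*(α-1)/Real.Gamma α + 1) * |t - t'|) :=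
    fun n => BVPaux.exists_un hα hη hμ hβ hΛ₁ hgA f hf hfpos a c ha hat hc hC1 b δ hb hδ
      hC2 X R hR hX (mf n) (hmf1 n) (hmfb n)
  choose uu hucont hufix hupos huub hulb hulip using hex
  set LL : ℝ := (a*R+c) * tau2 α η μ₀ β ν + α + (a*X+c)*(α-1)/Real.Gamma α + 1 with hLL
  have hLL0 : 0 ≤ LL := by
    rw [hLL]
    have h0 : (0:ℝ) ≤ a*R+c := by nlinarith
    have h1 : 0 ≤ (a*R+c) * tau2 α η μ₀ β ν := mul_nonneg h0 hτ2
    have h0' : (0:ℝ) ≤ a*X+c := by nlinarith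
    have h2 : 0 ≤ (a*X+c)*(α-1)/Real.Gamma α :=
      div_nonneg (mul_nonneg h0' (by linarith)) hΓ.le
    linarith
  have hvvc : ∀ n : ℕ, Continuous fun x : ↥(Icc (0:ℝ) 1) => uu n ↑x :=
    fun n => (hucont n).comp continuous_subtype_val
  set vv : ℕ → C(↥(Icc (0:ℝ) 1), ℝ) := fun n => ⟨fun x => uu n ↑x, hvvc n⟩ with hvv
  set SS : Set C(↥(Icc (0:ℝ) 1), ℝ) :=
    {v | (∀ x, v x ∈ Icc (0:ℝ) R) ∧ LipschitzWith (Real.toNNReal LL) ⇑v} with hSS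
  have hvvS : ∀ n, vv n ∈ SS := by
    intro n
    constructor
    · intro x
      exact ⟨hupos n _, huub n _ x.2⟩
    · apply LipschitzWith.of_dist_le_mul
      intro x y
      rw [Subtype.dist_eq, Real.dist_eq, Real.dist_eq]
      calc |uu n ↑x - uu n ↑y| ≤ LL * |(x:ℝ) - (y:ℝ)| := hulip n _ _
        _ ≤ (Real.toNNReal LL : ℝ) * |(x:ℝ) - (y:ℝ)| :=
            mul_le_mul_of_nonneg_right (Real.le_coe_toNNReal _) (abs_nonneg _)
  have hcomp : IsCompact SS := by
    apply ArzelaAscoli.isCompact_of_equicontinuous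
    · have himg : ContinuousMap.toFun '' SS
          = {h : ↥(Icc (0:ℝ) 1) → ℝ | (∀ x, h x ∈ Icc (0:ℝ) R)
              ∧ LipschitzWith (Real.toNNReal LL) h} := by
        ext h
        constructor
        · rintro ⟨v, hv, rfl⟩
          exact hv
        · intro hh
          exact ⟨⟨h, hh.2.continuous⟩, hh, rfl⟩
      rw [himg]
      apply IsCompact.of_isClosed_subset (isCompact_univ_pi
        (fun _ : ↥(Icc (0:ℝ) 1) => isCompact_Icc (a := (0:ℝ)) (b := R)))
      · have hsplit : {h : ↥(Icc (0:ℝ) 1) → ℝ | (∀ x, h x ∈ Icc (0:ℝ) R)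
            ∧ LipschitzWith (Real.toNNReal LL) h}
            = {h : ↥(Icc (0:ℝ) 1) → ℝ | ∀ x, h x ∈ Icc (0:ℝ) R}
              ∩ {h | LipschitzWith (Real.toNNReal LL) h} := by
          ext h
          simp [Set.mem_setOf_eq, Set.mem_inter_iff]
        rw [hsplit]
        apply IsClosed.inter
        · have he2 : {h : ↥(Icc (0:ℝ) 1) → ℝ | ∀ x, h x ∈ Icc (0:ℝ) R}
              = Set.pi univ (fun _ => Icc (0:ℝ) R) := by
            ext h
            rw [Set.mem_univ_pi]
            exact Iff.rfl
          rw [he2]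
          exact isClosed_set_pi (fun _ _ => isClosed_Icc)
        · have he3 : {h : ↥(Icc (0:ℝ) 1) → ℝ | LipschitzWith (Real.toNNReal LL) h}
              = ⋂ (x : ↥(Icc (0:ℝ) 1)), ⋂ (y : ↥(Icc (0:ℝ) 1)),
                  {h | dist (h x) (h y) ≤ (Real.toNNReal LL : ℝ) * dist x y} := by
            ext h
            simp only [Set.mem_setOf_eq, Set.mem_iInter]
            exact ⟨fun hl x y => hl.dist_le_mul x y, fun hl => LipschitzWith.of_dist_le_mul hl⟩
          rw [he3]
          apply isClosed_iInter
          intro x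
          apply isClosed_iInter
          intro y
          exact isClosed_le ((continuous_apply x).dist (continuous_apply y)) continuous_const
      · rintro h ⟨hr, _⟩
        intro x _
        exact hr x
    · intro x₀
      rw [Metric.equicontinuousAt_iff]
      intro ε hε
      refine ⟨ε/(LL+1), by positivity, fun x hx i => ?_⟩
      have hli := i.2.2
      rw [dist_comm]
      calc dist ((i : C(↥(Icc (0:ℝ) 1), ℝ)) x) ((i : C(↥(Icc (0:ℝ) 1), ℝ)) x₀)
          ≤ (Real.toNNReal LL : ℝ) * dist x x₀ := hli.dist_le_mul x x₀
        _ = LL * dist x x₀ := by rw [Real.coe_toNNReal _ hLL0]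
        _ < ε := by
            have h1 : dist x x₀ < ε/(LL+1) := hx
            have h2 : LL * dist x x₀ ≤ LL * (ε/(LL+1)) :=
              mul_le_mul_of_nonneg_left h1.le hLL0
            have h3 : LL * (ε/(LL+1)) < (LL+1) * (ε/(LL+1)) :=
              mul_lt_mul_of_pos_right (by linarith) (by positivity)
            have h4 : (LL+1) * (ε/(LL+1)) = ε := by field_simp
            calc LL * dist x x₀ ≤ LL * (ε/(LL+1)) := h2
              _ < (LL+1) * (ε/(LL+1)) := h3
              _ = ε := h4
  obtain ⟨vL, hvLS, φ, hφmono, hφtend⟩ := hcomp.tendsto_subseq hvvS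
  have hdist0 : Filter.Tendsto (fun k => dist ((vv ∘ φ) k) vL) atTop (nhds 0) :=
    tendsto_iff_dist_tendsto_zero.1 hφtend
  set u : ℝ → ℝ := fun t => vL ⟨BVPaux.projI t, BVPaux.projI_mem t⟩ with hu
  have hu_eq : ∀ (s : ℝ) (hs : s ∈ Icc (0:ℝ) 1), u s = vL ⟨s, hs⟩ := by
    intro s hs
    have hco : (⟨BVPaux.projI s, BVPaux.projI_mem s⟩ : ↥(Icc (0:ℝ) 1)) = ⟨s, hs⟩ :=
      Subtype.ext (BVPaux.projI_eq_self hs)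
    simp only [hu]
    rw [hco]
  have huc : Continuous u :=
    vL.continuous.comp (BVPaux.projI_continuous.subtype_mk BVPaux.projI_mem)
  have hu0 : ∀ s ∈ Icc (0:ℝ) 1, 0 ≤ u s := by
    intro s hs
    rw [hu_eq s hs]
    exact (hvLS.1 ⟨s, hs⟩).1
  have huR : ∀ s ∈ Icc (0:ℝ) 1, u s ≤ R := by
    intro s hs
    rw [hu_eq s hs]
    exact (hvLS.1 ⟨s, hs⟩).2
  have hsup : ∀ (k : ℕ) (s : ℝ) (hs : s ∈ Icc (0:ℝ) 1),
      |uu (φ k) s - u s| ≤ dist ((vv ∘ φ) k) vL := by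
    intro k s hs
    rw [hu_eq s hs]
    have h1 := ContinuousMap.dist_apply_le_dist (f := (vv ∘ φ) k) (g := vL) ⟨s, hs⟩
    rw [Real.dist_eq] at h1
    exact h1
  have hFFcont : ∀ w : ℝ → ℝ, Continuous w → Continuous fun s => BVPaux.FF f X s (w s) :=
    fun w hw => (BVPaux.FF_cont hf).comp (continuous_id.prodMk hw)
  have hFFbd : ∀ (s x : ℝ), |BVPaux.FF f X s x| ≤ a*X + c := by
    intro s x
    rw [abs_of_nonneg (BVPaux.FF_nonneg hfpos s x)]
    exact BVPaux.FF_le' ha hX0 hC1 s x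
  have hgmbd : ∀ (n : ℕ) (w : ℝ → ℝ) (s : ℝ), |BVPaux.gm f X n s (w s)| ≤ a*X + c := by
    intro n w s
    rw [abs_of_nonneg (BVPaux.gm_nonneg hfpos n s (w s))]
    exact le_trans (BVPaux.gm_le_FF hf hfpos hX0 n s (w s)) (BVPaux.FF_le' ha hX0 hC1 s (w s))
  have hint1 : ∀ (k : ℕ) (t : ℝ), IntegrableOn
      (fun s => Hker α η μ₀ β ν t s * BVPaux.gm f X (mf (φ k)) s (uu (φ k) s))
      (Icc (0:ℝ) 1) volume := fun k t =>
    BVPaux.Hker_int hα t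
      ((BVPaux.gm_meas hf (mf (φ k)) (hucont (φ k))).aestronglyMeasurable)
      (hgmbd (mf (φ k)) (uu (φ k)))
  have hint2 : ∀ (w : ℝ → ℝ), Continuous w → ∀ t : ℝ, IntegrableOn
      (fun s => Hker α η μ₀ β ν t s * BVPaux.FF f X s (w s)) (Icc (0:ℝ) 1) volume :=
    fun w hw t =>
      BVPaux.Hker_int hα t ((hFFcont w hw).aestronglyMeasurable) (fun s => hFFbd s (w s))
  have hkey : ∀ t ∈ Icc (0:ℝ) 1,
      u t = ∫ s in Icc (0:ℝ) 1, Hker α η μ₀ β ν t s * BVPaux.FF f X s (u s) := by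
    intro t ht
    apply eq_of_forall_dist_le
    intro ε hε
    rw [Real.dist_eq]
    set ε1 : ℝ := ε/(5*(tau2 α η μ₀ β ν + 1)) with hε1
    have hε1pos : 0 < ε1 := by rw [hε1]; positivity
    have hτε1 : tau2 α η μ₀ β ν * ε1 ≤ ε/5 := by
      rw [hε1, mul_div_assoc']
      rw [div_le_div_iff₀ (by positivity) (by norm_num : (0:ℝ) < 5)]
      nlinarith
    obtain ⟨Mbig, hMbig⟩ := BVPaux.gm_ge_FF_sub ha hc hf hfpos hX0 hC1 hε1pos
    obtain ⟨d, hd, hdc⟩ := BVPaux.FF_ucx hf hX0 hε1pos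
    have hev1 : ∀ᶠ k in atTop, dist ((vv ∘ φ) k) vL < min (ε/5) d :=
      hdist0.eventually_lt_const (lt_min (by positivity) hd)
    have hev2 : ∀ᶠ k in atTop, Mbig ≤ mf (φ k) := by
      filter_upwards [Filter.eventually_ge_atTop Mbig] with k hk
      exact le_trans hk (le_trans (hφmono.le_apply) (hmfself (φ k)))
    have hev3 : ∀ᶠ k in atTop, 1/((mf (φ k) : ℕ) : ℝ) ≤ ε/5 := by
      filter_upwards [Filter.eventually_ge_atTop (⌈5/ε⌉₊ + 1)] with k hk
      have h1 : (⌈5/ε⌉₊ + 1 : ℕ) ≤ mf (φ k) :=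
        le_trans hk (le_trans (hφmono.le_apply) (hmfself (φ k)))
      have h2 : 5/ε ≤ ((mf (φ k) : ℕ) : ℝ) := by
        have h3 : (5:ℝ)/ε ≤ (⌈(5:ℝ)/ε⌉₊ : ℝ) := Nat.le_ceil _
        have h4 : ((⌈(5:ℝ)/ε⌉₊ : ℕ) : ℝ) ≤ ((mf (φ k) : ℕ) : ℝ) := by
          have h5 : ⌈(5:ℝ)/ε⌉₊ ≤ mf (φ k) := by omega
          exact_mod_cast h5
        linarith
      have h5 : (0:ℝ) < ((mf (φ k) : ℕ) : ℝ) := by linarith [hmf1 (φ k)]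
      rw [div_le_div_iff₀ h5 (by norm_num : (0:ℝ) < 5)]
      rw [div_le_iff₀ hε] at h2
      nlinarith
    obtain ⟨k, hks⟩ := ((hev1.and hev2).and hev3).exists
    obtain ⟨⟨hk1, hk2⟩, hk3⟩ := hks
    have hk1a : dist ((vv ∘ φ) k) vL ≤ ε/5 := le_trans hk1.le (min_le_left _ _)
    have hk1b : dist ((vv ∘ φ) k) vL ≤ d := le_trans hk1.le (min_le_right _ _)
    have e0 : |u t - uu (φ k) t| ≤ ε/5 := by
      rw [abs_sub_comm]
      exact le_trans (hsup k t ht) hk1a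
    have efix := hufix (φ k) t ht
    have eA : |(∫ s in Icc (0:ℝ) 1,
        Hker α η μ₀ β ν t s * BVPaux.gm f X (mf (φ k)) s (uu (φ k) s))
        - ∫ s in Icc (0:ℝ) 1, Hker α η μ₀ β ν t s * BVPaux.FF f X s (uu (φ k) s)|
        ≤ tau2 α η μ₀ β ν * ε1 := by
      apply BVPaux.Hker_integral_close hα hη hμ hβ hΛ₁ hgA ht (hint1 k t)
        (hint2 (uu (φ k)) (hucont (φ k)) t)
      intro s hs
      rw [abs_le]
      constructor
      · have h6 := hMbig (mf (φ k)) hk2 s (uu (φ k) s)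
        linarith
      · have h6 := BVPaux.gm_le_FF hf hfpos hX0 (mf (φ k)) s (uu (φ k) s)
        linarith [hε1pos]
    have eB : |(∫ s in Icc (0:ℝ) 1, Hker α η μ₀ β ν t s * BVPaux.FF f X s (uu (φ k) s))
        - ∫ s in Icc (0:ℝ) 1, Hker α η μ₀ β ν t s * BVPaux.FF f X s (u s)|
        ≤ tau2 α η μ₀ β ν * ε1 := by
      apply BVPaux.Hker_integral_close hα hη hμ hβ hΛ₁ hgA ht
        (hint2 (uu (φ k)) (hucont (φ k)) t) (hint2 u huc t)
      intro s hs
      apply hdc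
      exact le_trans (hsup k s hs) hk1b
    have hm0k : (0:ℝ) < ((mf (φ k) : ℕ) : ℝ) := by linarith [hmf1 (φ k)]
    have eC : rho α η t / ((mf (φ k) : ℕ) : ℝ) ≤ ε/5 := by
      have h1 : rho α η t / ((mf (φ k) : ℕ) : ℝ) ≤ 1 / ((mf (φ k) : ℕ) : ℝ) := by
        rw [div_le_div_iff_of_pos_right hm0k]
        exact (BVPaux.rho_mem hα hη ht).2
      linarith
    have hρ0 : 0 ≤ rho α η t / ((mf (φ k) : ℕ) : ℝ) :=
      div_nonneg (BVPaux.rho_mem hα hη ht).1 hm0k.le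
    have habs1 : |u t - ∫ s in Icc (0:ℝ) 1, Hker α η μ₀ β ν t s * BVPaux.FF f X s (u s)|
        ≤ |u t - uu (φ k) t|
          + |(∫ s in Icc (0:ℝ) 1,
              Hker α η μ₀ β ν t s * BVPaux.gm f X (mf (φ k)) s (uu (φ k) s))
              - ∫ s in Icc (0:ℝ) 1, Hker α η μ₀ β ν t s * BVPaux.FF f X s (uu (φ k) s)|
          + |(∫ s in Icc (0:ℝ) 1, Hker α η μ₀ β ν t s * BVPaux.FF f X s (uu (φ k) s))
              - ∫ s in Icc (0:ℝ) 1, Hker α η μ₀ β ν t s * BVPaux.FF f X s (u s)|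
          + rho α η t / ((mf (φ k) : ℕ) : ℝ) := by
      have hrw : u t - ∫ s in Icc (0:ℝ) 1, Hker α η μ₀ β ν t s * BVPaux.FF f X s (u s)
          = (u t - uu (φ k) t)
            + ((∫ s in Icc (0:ℝ) 1,
                Hker α η μ₀ β ν t s * BVPaux.gm f X (mf (φ k)) s (uu (φ k) s))
                - ∫ s in Icc (0:ℝ) 1, Hker α η μ₀ β ν t s * BVPaux.FF f X s (uu (φ k) s))
            + ((∫ s in Icc (0:ℝ) 1, Hker α η μ₀ β ν t s * BVPaux.FF f X s (uu (φ k) s))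
                - ∫ s in Icc (0:ℝ) 1, Hker α η μ₀ β ν t s * BVPaux.FF f X s (u s))
            + rho α η t / ((mf (φ k) : ℕ) : ℝ) := by
        rw [efix]
        ring
      rw [hrw]
      set A1 := u t - uu (φ k) t
      set A2 := (∫ s in Icc (0:ℝ) 1,
          Hker α η μ₀ β ν t s * BVPaux.gm f X (mf (φ k)) s (uu (φ k) s))
          - ∫ s in Icc (0:ℝ) 1, Hker α η μ₀ β ν t s * BVPaux.FF f X s (uu (φ k) s)
      set A3 := (∫ s in Icc (0:ℝ) 1, Hker α η μ₀ β ν t s * BVPaux.FF f X s (uu (φ k) s))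
          - ∫ s in Icc (0:ℝ) 1, Hker α η μ₀ β ν t s * BVPaux.FF f X s (u s)
      set A4 := rho α η t / ((mf (φ k) : ℕ) : ℝ)
      have t1 := abs_add_le (A1 + A2 + A3) A4
      have t2 := abs_add_le (A1 + A2) A3
      have t3 := abs_add_le A1 A2
      have t4 : |A4| = A4 := abs_of_nonneg hρ0
      linarith
    linarith [habs1, e0, eA, eB, eC, hτε1, hε.le]
  have hfinal : ∀ t ∈ Icc (0:ℝ) 1,
      u t = ∫ s in Icc (0:ℝ) 1, Hker α η μ₀ β ν t s * f s (u s) := by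
    intro t ht
    rw [hkey t ht]
    apply setIntegral_congr_fun measurableSet_Icc
    intro s hs
    have h1 : BVPaux.FF f X s (u s) = f s (u s) :=
      BVPaux.FF_eq hs (hu0 s hs) (le_trans (huR s hs) hRX)
    show Hker α η μ₀ β ν t s * BVPaux.FF f X s (u s) = Hker α η μ₀ β ν t s * f s (u s)
    rw [h1]
  have hev4 : ∀ᶠ k in atTop, dist ((vv ∘ φ) k) vL < δ/4 :=
    hdist0.eventually_lt_const (by positivity)
  obtain ⟨k0, hk0⟩ := hev4.exists
  obtain ⟨t₀, ht₀, hgt⟩ := hulb (φ k0)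
  have hnz : δ/4 < u t₀ := by
    have h1 := hsup k0 t₀ ht₀
    have h2 := abs_le.1 h1
    linarith [h2.1, h2.2]
  refine ⟨u, huc.continuousOn, hu0, ⟨t₀, ht₀, ?_⟩, hfinal⟩
  have : 0 < u t₀ := lt_trans (by positivity) hnz
  exact ne_of_gt this
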